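/- arXiv:2208.00905 — 3 statements merged into one kernel-verified Lean document; each statement's English description precedes it below -/
import Mathlib

section
/- Let 1 ≤ L and N ≥ L + n. If the input sequence {u_k}_{k=0}^{N−1} is persistently exciting of order L + n, then for every system (A,B,C,D) with (A,B) controllable and every initial state x_0 ∈ ℝ^n, the column image of the stacked matrix [H_L(u); H_L(y)] equals the set 𝒯_L of all length-L input-output trajectories of the system, where {y_k}_{k=0}^{N−1} is the output generated from x_0 under u (Willems' Fundamental Lemma). -/
open Matrix Finset

noncomputable def stateSeq {n m : ℕ} (A : Matrix (Fin n) (Fin n) ℝ) (B : Matrix (Fin n) (Fin m) ℝ)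
    (x0 : Fin n → ℝ) (u : ℕ → Fin m → ℝ) : ℕ → Fin n → ℝ
  | 0 => x0
  | k + 1 => A.mulVec (stateSeq A B x0 u k) + B.mulVec (u k)

/-- Output sequence `y_k = C x_k + D u_k` of the LTI system started at `x0` with input `u`. -/
noncomputable def outputSeq {n m p : ℕ} (A : Matrix (Fin n) (Fin n) ℝ) (B : Matrix (Fin n) (Fin m) ℝ)
    (C : Matrix (Fin p) (Fin n) ℝ) (D : Matrix (Fin p) (Fin m) ℝ)
    (x0 : Fin n → ℝ) (u : ℕ → Fin m → ℝ) (k : ℕ) : Fin p → ℝ :=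
  C.mulVec (stateSeq A B x0 u k) + D.mulVec (u k)

/-- Markov parameters: `Γ_0 = D`, `Γ_j = C A^(j-1) B` for `j ≥ 1`. -/
noncomputable def Markov {n m p : ℕ} (A : Matrix (Fin n) (Fin n) ℝ) (B : Matrix (Fin n) (Fin m) ℝ)
    (C : Matrix (Fin p) (Fin n) ℝ) (D : Matrix (Fin p) (Fin m) ℝ) : ℕ → Matrix (Fin p) (Fin m) ℝ
  | 0 => D
  | j + 1 => C * A ^ j * B

/-- The matrix `M = [M_n ⋯ M_1 M_0]` with `M_j = ∑_{q=0}^j d_{j-q} Γ_q`; the block at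
block-column `i` (from the left, `i = 0,…,n`) is `M_{n-i}`. -/
noncomputable def Mmat {n m p : ℕ} (A : Matrix (Fin n) (Fin n) ℝ) (B : Matrix (Fin n) (Fin m) ℝ)
    (C : Matrix (Fin p) (Fin n) ℝ) (D : Matrix (Fin p) (Fin m) ℝ) (d : ℕ → ℝ) :
    Matrix (Fin p) (Fin (n + 1) × Fin m) ℝ :=
  Matrix.of fun i jl =>
    (∑ q ∈ Finset.range ((n - (jl.1 : ℕ)) + 1),
      d ((n - (jl.1 : ℕ)) - q) • Markov A B C D q) i jl.2

/-- The set `𝒯_L` of length-`L` input-output trajectories of the system: stacked vectors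
`(ū; ȳ)` such that `ȳ` is generated by the system from some initial state under input `ū`. -/
def TrajSet {n m p : ℕ} (A : Matrix (Fin n) (Fin n) ℝ) (B : Matrix (Fin n) (Fin m) ℝ)
    (C : Matrix (Fin p) (Fin n) ℝ) (D : Matrix (Fin p) (Fin m) ℝ) (L : ℕ) :
    Set ((Fin L × Fin m) ⊕ (Fin L × Fin p) → ℝ) :=
  {w | ∃ (xb : Fin n → ℝ) (ub : ℕ → Fin m → ℝ),
      (∀ (i : Fin L) (l : Fin m), w (Sum.inl (i, l)) = ub (i : ℕ) l) ∧
      (∀ (i : Fin L) (j : Fin p), w (Sum.inr (i, j)) = outputSeq A B C D xb ub (i : ℕ) j)}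

-- ===== auxiliary lemmas =====

lemma aux_vecMul_inj_of_rank {ι κ : Type*} [Fintype ι] [Fintype κ] (M : Matrix ι κ ℝ)
    (h : M.rank = Fintype.card ι) {w : ι → ℝ} (hw : w ᵥ* M = 0) : w = 0 := by
  have hli : LinearIndependent ℝ (fun i => M i) := by
    rw [linearIndependent_iff_card_eq_finrank_span]
    rw [Matrix.rank_eq_finrank_span_row] at h
    exact h.symm
  exact Matrix.vecMul_injective_iff.mpr hli (a₂ := 0) (by simpa using hw)

lemma aux_mulVec_surj {ι κ : Type*} [Fintype ι] [Fintype κ] (M : Matrix ι κ ℝ)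
    (h : ∀ w : ι → ℝ, w ᵥ* M = 0 → w = 0) : Function.Surjective M.mulVec := by
  have hli : LinearIndependent ℝ (fun i => M i) := by
    rw [show (fun i => M i) = M.row from rfl, ← Matrix.vecMul_injective_iff]
    intro w1 w2 hww
    have hww' : w1 ᵥ* M = w2 ᵥ* M := hww
    have : (w1 - w2) ᵥ* M = 0 := by rw [Matrix.sub_vecMul, hww', sub_self]
    exact sub_eq_zero.mp (h _ this)
  have hrank : M.rank = Fintype.card ι := by
    rw [Matrix.rank_eq_finrank_span_row]; exact finrank_span_eq_card hli
  have htop : LinearMap.range M.mulVecLin = ⊤ := by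
    apply Submodule.eq_top_of_finrank_eq
    rw [← Matrix.rank, hrank, Module.finrank_pi]
  intro v
  obtain ⟨c, hc⟩ := LinearMap.range_eq_top.mp htop v
  exact ⟨c, hc⟩

lemma mulVec_fin_sum {ι a b : Type*} [Fintype ι] [Fintype b] (M : Matrix a b ℝ)
    (c : ι → ℝ) (v : ι → b → ℝ) :
    M.mulVec (∑ k, c k • v k) = ∑ k, c k • M.mulVec (v k) := by
  simp only [← Matrix.mulVecLin_apply, map_sum, LinearMap.map_smul]

lemma mulVec_sum' {ι a b : Type*} [Fintype b] (s : Finset ι) (M : Matrix a b ℝ)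
    (v : ι → b → ℝ) : M.mulVec (∑ k ∈ s, v k) = ∑ k ∈ s, M.mulVec (v k) := by
  simp only [← Matrix.mulVecLin_apply, map_sum]

lemma sum_mulVec' {ι a b : Type*} [Fintype b] (s : Finset ι) (M : ι → Matrix a b ℝ)
    (v : b → ℝ) : (∑ j ∈ s, M j).mulVec v = ∑ j ∈ s, (M j).mulVec v := by
  classical
  induction s using Finset.induction with
  | empty => simp
  | @insert _ _ h ih => rw [Finset.sum_insert h, Finset.sum_insert h, Matrix.add_mulVec, ih]

lemma sum_dotProduct' {ι κ : Type*} [Fintype κ] (s : Finset ι) (v : ι → κ → ℝ) (w : κ → ℝ) :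
    (∑ j ∈ s, v j) ⬝ᵥ w = ∑ j ∈ s, v j ⬝ᵥ w := by
  classical
  induction s using Finset.induction with
  | empty => simp
  | @insert _ _ h ih => rw [Finset.sum_insert h, Finset.sum_insert h, add_dotProduct, ih]

lemma dotProduct_sum' {ι κ : Type*} [Fintype κ] (s : Finset ι) (w : κ → ℝ) (v : ι → κ → ℝ) :
    w ⬝ᵥ (∑ j ∈ s, v j) = ∑ j ∈ s, w ⬝ᵥ v j := by
  classical
  induction s using Finset.induction with
  | empty => simp
  | @insert _ _ h ih => rw [Finset.sum_insert h, Finset.sum_insert h, dotProduct_add, ih]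

lemma vecMul_smul' {a b : Type*} [Fintype a] (w : a → ℝ) (c : ℝ) (M : Matrix a b ℝ) :
    w ᵥ* (c • M) = c • (w ᵥ* M) := by
  funext x
  simp [Matrix.vecMul, dotProduct, Finset.mul_sum, mul_comm, mul_left_comm]

lemma vecMul_sum' {ι a b : Type*} [Fintype a] (s : Finset ι) (w : a → ℝ)
    (M : ι → Matrix a b ℝ) : w ᵥ* (∑ j ∈ s, M j) = ∑ j ∈ s, w ᵥ* M j := by
  classical
  induction s using Finset.induction with
  | empty => simp
  | @insert _ _ h ih => rw [Finset.sum_insert h, Finset.sum_insert h, Matrix.vecMul_add, ih]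

lemma CH_sum {n : ℕ} (A : Matrix (Fin n) (Fin n) ℝ) :
    ∑ j ∈ Finset.range (n + 1), A.charpoly.coeff j • A ^ j = 0 := by
  have h := Matrix.aeval_self_charpoly A
  rw [Polynomial.aeval_eq_sum_range] at h
  rwa [Matrix.charpoly_natDegree_eq_dim, Fintype.card_fin] at h

lemma CH_top {n : ℕ} (A : Matrix (Fin n) (Fin n) ℝ) : A.charpoly.coeff n = 1 := by
  have h := (Matrix.charpoly_monic A).coeff_natDegree
  rwa [Matrix.charpoly_natDegree_eq_dim, Fintype.card_fin] at h

-- ===== state sequence lemmas =====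

lemma stateSeq_shift {n m : ℕ} (A : Matrix (Fin n) (Fin n) ℝ) (B : Matrix (Fin n) (Fin m) ℝ)
    (x0 : Fin n → ℝ) (u : ℕ → Fin m → ℝ) (k : ℕ) :
    ∀ j, stateSeq A B x0 u (k + j)
      = stateSeq A B (stateSeq A B x0 u k) (fun t => u (k + t)) j := by
  intro j
  induction j with
  | zero => rfl
  | succ j ih => show stateSeq A B x0 u ((k+j)+1) = _; rw [stateSeq, ih]; rfl

lemma stateSeq_congr {n m : ℕ} (A : Matrix (Fin n) (Fin n) ℝ) (B : Matrix (Fin n) (Fin m) ℝ)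
    (x0 x0' : Fin n → ℝ) (u u' : ℕ → Fin m → ℝ) (k : ℕ)
    (hx : x0 = x0') (hu : ∀ t < k, u t = u' t) :
    stateSeq A B x0 u k = stateSeq A B x0' u' k := by
  induction k with
  | zero => exact hx
  | succ k ih =>
      rw [stateSeq, stateSeq, ih (fun t ht => hu t (ht.trans (Nat.lt_succ_self k))),
        hu k (Nat.lt_succ_self k)]

lemma stateSeq_formula {n m : ℕ} (A : Matrix (Fin n) (Fin n) ℝ) (B : Matrix (Fin n) (Fin m) ℝ)
    (x0 : Fin n → ℝ) (u : ℕ → Fin m → ℝ) (k : ℕ) :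
    stateSeq A B x0 u k
      = (A ^ k).mulVec x0 + ∑ t ∈ Finset.range k, ((A ^ (k - 1 - t)) * B).mulVec (u t) := by
  induction k with
  | zero => simp [stateSeq]
  | succ k ih =>
      rw [stateSeq, ih]
      rw [Matrix.mulVec_add, mulVec_sum' (Finset.range k)]
      rw [Finset.sum_range_succ]
      have h1 : A *ᵥ (A ^ k *ᵥ x0) = A ^ (k+1) *ᵥ x0 := by
        rw [Matrix.mulVec_mulVec, ← pow_succ']
      have h2 : ∀ t ∈ Finset.range k,
          A *ᵥ ((A ^ (k - 1 - t) * B) *ᵥ u t) = (A ^ (k + 1 - 1 - t) * B) *ᵥ u t := by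
        intro t ht
        simp only [Finset.mem_range] at ht
        rw [Matrix.mulVec_mulVec, ← Matrix.mul_assoc, ← pow_succ']
        have he : (k - 1 - t) + 1 = k + 1 - 1 - t := by omega
        rw [he]
      rw [Finset.sum_congr rfl h2]
      have h3 : (A ^ (k + 1 - 1 - k) * B) *ᵥ u k = B *ᵥ u k := by
        simp
      rw [h3, h1]
      abel

lemma stateSeq_lin {n m K : ℕ} (A : Matrix (Fin n) (Fin n) ℝ) (B : Matrix (Fin n) (Fin m) ℝ)
    (c : Fin K → ℝ) (xs : Fin K → Fin n → ℝ)
    (us : Fin K → ℕ → Fin m → ℝ) (j : ℕ) :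
    stateSeq A B (∑ k, c k • xs k) (fun t => ∑ k, c k • us k t) j
      = ∑ k, c k • stateSeq A B (xs k) (us k) j := by
  induction j with
  | zero => rfl
  | succ j ih =>
      rw [stateSeq, ih, mulVec_fin_sum]
      have : B.mulVec (∑ k, c k • us k j) = ∑ k, c k • B.mulVec (us k j) := mulVec_fin_sum B c _
      rw [this, ← Finset.sum_add_distrib]
      refine Finset.sum_congr rfl fun k _ => ?_
      show _ = c k • (A *ᵥ stateSeq A B (xs k) (us k) j + B *ᵥ us k j)
      rw [smul_add]

noncomputable def Fmat {n : ℕ} (A : Matrix (Fin n) (Fin n) ℝ) (s : ℕ) :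
    Matrix (Fin n) (Fin n) ℝ :=
  ∑ j ∈ Finset.Ico (s + 1) (n + 1), A.charpoly.coeff j • A ^ (j - 1 - s)

lemma key_relation {n m : ℕ} (A : Matrix (Fin n) (Fin n) ℝ) (B : Matrix (Fin n) (Fin m) ℝ)
    (x0 : Fin n → ℝ) (u : ℕ → Fin m → ℝ) (k : ℕ) :
    ∑ j ∈ Finset.range (n + 1), A.charpoly.coeff j • stateSeq A B x0 u (k + j)
      = ∑ t ∈ Finset.range n, (Fmat A t * B).mulVec (u (k + t)) := by
  set d := A.charpoly.coeff with hd
  have expand : ∀ j, stateSeq A B x0 u (k + j)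
      = (A ^ j).mulVec (stateSeq A B x0 u k)
        + ∑ t ∈ Finset.range j, ((A ^ (j - 1 - t)) * B).mulVec (u (k + t)) := by
    intro j
    rw [stateSeq_shift A B x0 u k j, stateSeq_formula]
  calc ∑ j ∈ Finset.range (n + 1), d j • stateSeq A B x0 u (k + j)
      = ∑ j ∈ Finset.range (n + 1), (d j • (A ^ j).mulVec (stateSeq A B x0 u k)
          + ∑ t ∈ Finset.range j, d j • ((A ^ (j - 1 - t)) * B).mulVec (u (k + t))) := by
        refine Finset.sum_congr rfl fun j _ => ?_
        rw [expand j, smul_add, Finset.smul_sum]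
    _ = (∑ j ∈ Finset.range (n + 1), d j • A ^ j).mulVec (stateSeq A B x0 u k)
          + ∑ j ∈ Finset.range (n + 1), ∑ t ∈ Finset.range j,
              d j • ((A ^ (j - 1 - t)) * B).mulVec (u (k + t)) := by
        rw [Finset.sum_add_distrib, sum_mulVec']
        congr 1
        refine Finset.sum_congr rfl fun j _ => ?_
        rw [Matrix.smul_mulVec]
    _ = ∑ t ∈ Finset.range n, ∑ j ∈ Finset.Ico (t + 1) (n + 1),
          d j • ((A ^ (j - 1 - t)) * B).mulVec (u (k + t)) := by
        rw [CH_sum, Matrix.zero_mulVec, zero_add]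
        rw [Finset.sum_comm' (h := ?_)]
        intro j t
        simp only [Finset.mem_range, Finset.mem_Ico]
        omega
    _ = ∑ t ∈ Finset.range n, (Fmat A t * B).mulVec (u (k + t)) := by
        refine Finset.sum_congr rfl fun t _ => ?_
        rw [Fmat, Matrix.sum_mul, sum_mulVec']
        refine Finset.sum_congr rfl fun j _ => ?_
        rw [Matrix.smul_mul, Matrix.smul_mulVec]

/-- Key kernel lemma: left kernel of [H_L(u); X] is trivial. -/
lemma kernel_lemma {n m L N : ℕ} (hL : 1 ≤ L) (hN : L + n ≤ N)
    (u : ℕ → Fin m → ℝ) (A : Matrix (Fin n) (Fin n) ℝ) (B : Matrix (Fin n) (Fin m) ℝ)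
    (hPE : (Matrix.of fun (il : Fin (L + n) × Fin m) (k : Fin (N - (L + n) + 1)) =>
        u ((k : ℕ) + (il.1 : ℕ)) il.2).rank = m * (L + n))
    (hctrb : (Matrix.of fun (i : Fin n) (jl : Fin n × Fin m) =>
        (A ^ (jl.1 : ℕ) * B) i jl.2).rank = n)
    (x0 : Fin n → ℝ)
    (w : ((Fin L × Fin m) ⊕ Fin n) → ℝ)
    (hw : w ᵥ* (Matrix.of fun (i : (Fin L × Fin m) ⊕ Fin n) (k : Fin (N - L + 1)) =>
        Sum.elim (fun il : Fin L × Fin m => u ((k : ℕ) + (il.1 : ℕ)) il.2)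
          (fun j : Fin n => stateSeq A B x0 u (k : ℕ) j) i) = 0) :
    w = 0 := by
  classical
  set d := A.charpoly.coeff with hd
  set X : ℕ → Fin n → ℝ := stateSeq A B x0 u with hX
  set Ξ : ℕ → Fin m → ℝ := fun i => if h : i < L then (fun l => w (Sum.inl (⟨i, h⟩, l))) else 0
    with hΞ
  have hΞpos : ∀ (i : Fin L) (l : Fin m), Ξ (i : ℕ) l = w (Sum.inl (i, l)) := by
    intro i l
    rw [hΞ]
    simp only [i.isLt, dif_pos]
  have hΞ0 : ∀ i, L ≤ i → Ξ i = 0 := by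
    intro i hi
    rw [hΞ]
    exact dif_neg (by omega)
  set η : Fin n → ℝ := fun j => w (Sum.inr j) with hη
  -- pointwise form of hw
  have hw0 : ∀ k : ℕ, k ≤ N - L →
      (∑ i ∈ Finset.range L, Ξ i ⬝ᵥ u (k + i)) + η ⬝ᵥ X k = 0 := by
    intro k hk
    have hkf : k < N - L + 1 := by omega
    have := congrFun hw ⟨k, hkf⟩
    simp only [Matrix.vecMul, dotProduct, Pi.zero_apply] at this
    rw [Fintype.sum_sum_type] at this
    rw [Fintype.sum_prod_type] at this
    simp only [Matrix.of_apply, Sum.elim_inl, Sum.elim_inr] at this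
    have hre : ∀ i : Fin L, (∑ l, w (Sum.inl (i, l)) * u (k + ↑i) l) = Ξ ↑i ⬝ᵥ u (k + ↑i) := by
      intro i
      unfold dotProduct
      refine Finset.sum_congr rfl fun l _ => ?_
      rw [hΞpos i l]
    rw [Finset.sum_congr rfl (fun i _ => hre i)] at this
    rw [← Fin.sum_univ_eq_sum_range (fun i => Ξ i ⬝ᵥ u (k + i)) L]
    exact this
  -- the ζ coefficients
  set ζ : ℕ → Fin m → ℝ := fun s =>
    (∑ j ∈ Finset.range (n + 1), if j ≤ s then d j • Ξ (s - j) else 0)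
      + (if s < n then η ᵥ* (Fmat A s * B) else 0) with hζdef
  have hclaim : ∀ k : ℕ, k ≤ N - L - n →
      ∑ s ∈ Finset.range (L + n), ζ s ⬝ᵥ u (k + s) = 0 := by
    intro k hk
    -- combine hw0 at k, k+1, ..., k+n with weights d j
    have hcomb : (∑ j ∈ Finset.range (n + 1),
          d j * (∑ i ∈ Finset.range L, Ξ i ⬝ᵥ u (k + j + i)))
        + (∑ j ∈ Finset.range (n + 1), d j * (η ⬝ᵥ X (k + j))) = 0 := by
      rw [← Finset.sum_add_distrib]
      rw [show (0:ℝ) = ∑ j ∈ Finset.range (n+1), (0:ℝ) by simp]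
      refine Finset.sum_congr rfl fun j hj => ?_
      simp only [Finset.mem_range] at hj
      rw [← mul_add, hw0 (k + j) (by omega), mul_zero]
    -- second part equals the Fmat sum
    have hT2 : (∑ j ∈ Finset.range (n + 1), d j * (η ⬝ᵥ X (k + j)))
        = ∑ t ∈ Finset.range n, (η ᵥ* (Fmat A t * B)) ⬝ᵥ u (k + t) := by
      have e1 : ∀ j, d j * (η ⬝ᵥ X (k + j)) = η ⬝ᵥ (d j • X (k + j)) := by
        intro j
        rw [dotProduct_smul]
        simp
      rw [Finset.sum_congr rfl (fun j _ => e1 j), ← dotProduct_sum']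
      rw [key_relation A B x0 u k]
      rw [dotProduct_sum']
      refine Finset.sum_congr rfl fun t _ => ?_
      rw [Matrix.dotProduct_mulVec]
    -- first part: reindex
    have hT1 : (∑ j ∈ Finset.range (n + 1),
          d j * (∑ i ∈ Finset.range L, Ξ i ⬝ᵥ u (k + j + i)))
        = ∑ s ∈ Finset.range (L + n),
            (∑ j ∈ Finset.range (n + 1), if j ≤ s then d j • Ξ (s - j) else 0) ⬝ᵥ u (k + s) := by
      have inner : ∀ j ∈ Finset.range (n + 1),
          d j * (∑ i ∈ Finset.range L, Ξ i ⬝ᵥ u (k + j + i))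
            = ∑ s ∈ Finset.range (L + n), (if j ≤ s then d j • Ξ (s - j) else 0) ⬝ᵥ u (k + s) := by
        intro j hj
        simp only [Finset.mem_range] at hj
        rw [Finset.mul_sum]
        have step1 : ∀ i ∈ Finset.range L,
            d j * (Ξ i ⬝ᵥ u (k + j + i))
              = (fun s => (if j ≤ s then d j • Ξ (s - j) else 0) ⬝ᵥ u (k + s)) (j + i) := by
          intro i hi
          simp only []
          rw [if_pos (Nat.le_add_right j i)]
          have : j + i - j = i := by omega
          rw [this, smul_dotProduct]
          have : k + j + i = k + (j + i) := by omega
          rw [this]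
          simp
        rw [Finset.sum_congr rfl step1]
        have e2 : ∑ s ∈ Finset.Ico j (j + L),
            (fun s => (if j ≤ s then d j • Ξ (s - j) else 0) ⬝ᵥ u (k + s)) s
            = ∑ x ∈ Finset.range L,
              (fun s => (if j ≤ s then d j • Ξ (s - j) else 0) ⬝ᵥ u (k + s)) (j + x) := by
          rw [Finset.sum_Ico_eq_sum_range]
          simp only [Nat.add_sub_cancel_left]
        rw [← e2]
        refine Finset.sum_subset ?_ ?_
        · intro s hs
          simp only [Finset.mem_Ico] at hs
          simp only [Finset.mem_range]
          omega
        · intro s hs hns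
          simp only [Finset.mem_range] at hs
          simp only [Finset.mem_Ico, not_and, not_lt] at hns
          by_cases hjs : j ≤ s
          · have : L ≤ s - j := by have := hns hjs; omega
            simp only [if_pos hjs, hΞ0 _ this, smul_zero, zero_dotProduct]
          · simp only [if_neg hjs, zero_dotProduct]
      rw [Finset.sum_congr rfl inner]
      rw [Finset.sum_comm]
      refine Finset.sum_congr rfl fun s _ => ?_
      rw [← sum_dotProduct']
    -- assemble claim
    have hT2' : (∑ t ∈ Finset.range n, (η ᵥ* (Fmat A t * B)) ⬝ᵥ u (k + t))
        = ∑ s ∈ Finset.range (L + n),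
            (if s < n then η ᵥ* (Fmat A s * B) else 0) ⬝ᵥ u (k + s) := by
      have e1 : ∀ t ∈ Finset.range n,
          (η ᵥ* (Fmat A t * B)) ⬝ᵥ u (k + t)
            = (if t < n then η ᵥ* (Fmat A t * B) else 0) ⬝ᵥ u (k + t) := by
        intro t ht
        simp only [Finset.mem_range] at ht
        rw [if_pos ht]
      rw [Finset.sum_congr rfl e1]
      refine Finset.sum_subset ?_ ?_
      · intro t ht
        simp only [Finset.mem_range] at *
        omega
      · intro s hs hns
        simp only [Finset.mem_range] at hs hns
        rw [if_neg hns, zero_dotProduct]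
    calc ∑ s ∈ Finset.range (L + n), ζ s ⬝ᵥ u (k + s)
        = (∑ s ∈ Finset.range (L + n),
            (∑ j ∈ Finset.range (n + 1), if j ≤ s then d j • Ξ (s - j) else 0) ⬝ᵥ u (k + s))
          + ∑ s ∈ Finset.range (L + n),
            (if s < n then η ᵥ* (Fmat A s * B) else 0) ⬝ᵥ u (k + s) := by
          rw [← Finset.sum_add_distrib]
          refine Finset.sum_congr rfl fun s _ => ?_
          rw [hζdef]
          simp only []
          rw [add_dotProduct]
      _ = 0 := by rw [← hT1, ← hT2', ← hT2]; exact hcomb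
  -- apply persistency of excitation
  have hζ : ∀ s : ℕ, s < L + n → ζ s = 0 := by
    have hWH : (fun sl : Fin (L + n) × Fin m => ζ (sl.1 : ℕ) sl.2)
        ᵥ* (Matrix.of fun (il : Fin (L + n) × Fin m) (k : Fin (N - (L + n) + 1)) =>
            u ((k : ℕ) + (il.1 : ℕ)) il.2) = 0 := by
      funext k
      simp only [Matrix.vecMul, dotProduct, Matrix.of_apply, Pi.zero_apply]
      rw [Fintype.sum_prod_type]
      have e1 : ∀ s : Fin (L + n),
          (∑ l, ζ (s : ℕ) l * u ((k : ℕ) + (s : ℕ)) l) = ζ (s : ℕ) ⬝ᵥ u ((k : ℕ) + (s : ℕ)) := by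
        intro s; rfl
      rw [Finset.sum_congr rfl (fun s _ => e1 s)]
      rw [Fin.sum_univ_eq_sum_range (fun s => ζ s ⬝ᵥ u ((k : ℕ) + s)) (L + n)]
      exact hclaim (k : ℕ) (by have := k.isLt; omega)
    have hW0 := aux_vecMul_inj_of_rank _ (by
      rw [hPE]
      simp [Fintype.card_prod, mul_comm]) hWH
    intro s hs
    funext l
    exact congrFun hW0 ((⟨s, hs⟩, l) : Fin (L + n) × Fin m)
  -- extract Ξ = 0
  have hdn : d n = 1 := CH_top A
  have hΞall : ∀ i, Ξ i = 0 := by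
    have hQ : ∀ q, ∀ i, L ≤ i + q + 1 → i < L → Ξ i = 0 := by
      intro q
      induction q using Nat.strong_induction_on with
      | _ q ih =>
        intro i h1 h2
        have hz := hζ (n + i) (by omega)
        rw [hζdef] at hz
        simp only [] at hz
        rw [if_neg (by omega : ¬ (n + i < n)), add_zero] at hz
        rw [Finset.sum_range_succ] at hz
        rw [if_pos (by omega : n ≤ n + i)] at hz
        have : n + i - n = i := by omega
        rw [this, hdn, one_smul] at hz
        have hrest : (∑ j ∈ Finset.range n, if j ≤ n + i then d j • Ξ (n + i - j) else 0) = 0 := by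
          refine Finset.sum_eq_zero fun j hj => ?_
          simp only [Finset.mem_range] at hj
          rw [if_pos (by omega : j ≤ n + i)]
          set i' := n + i - j with hi'
          by_cases hL' : L ≤ i'
          · rw [hΞ0 _ hL', smul_zero]
          · have hi'2 : i' < L := by omega
            have hgt : i < i' := by omega
            have : Ξ i' = 0 := by
              refine ih (L - 1 - i') (by omega) i' (by omega) hi'2
            rw [this, smul_zero]
        rw [hrest, zero_add] at hz
        exact hz
    intro i
    by_cases h : i < L
    · exact hQ (L - 1 - i) i (by omega) h
    · exact hΞ0 i (by omega)
  -- extract η ᵥ* (Fmat s * B) = 0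
  have hη2 : ∀ s, s < n → η ᵥ* (Fmat A s * B) = 0 := by
    intro s hs
    have hz := hζ s (by omega)
    rw [hζdef] at hz
    simp only [] at hz
    rw [if_pos hs] at hz
    have hrest : (∑ j ∈ Finset.range (n + 1), if j ≤ s then d j • Ξ (s - j) else 0) = 0 := by
      refine Finset.sum_eq_zero fun j hj => ?_
      by_cases hjs : j ≤ s
      · rw [if_pos hjs, hΞall, smul_zero]
      · rw [if_neg hjs]
    rw [hrest, zero_add] at hz
    exact hz
  -- extract η ᵥ* (A^q * B) = 0
  have hAq : ∀ q, q < n → η ᵥ* (A ^ q * B) = 0 := by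
    intro q
    induction q using Nat.strong_induction_on with
    | _ q ih =>
      intro hqn
      have h := hη2 (n - 1 - q) (by omega)
      set s := n - 1 - q with hs
      have hexp : η ᵥ* (Fmat A s * B)
          = ∑ j ∈ Finset.Ico (s + 1) (n + 1), d j • (η ᵥ* (A ^ (j - 1 - s) * B)) := by
        rw [Fmat, Matrix.sum_mul, vecMul_sum']
        refine Finset.sum_congr rfl fun j _ => ?_
        rw [Matrix.smul_mul, vecMul_smul']
      rw [hexp] at h
      rw [Finset.sum_Ico_succ_top (by omega : s + 1 ≤ n)] at h
      have hlow : (∑ j ∈ Finset.Ico (s + 1) n, d j • (η ᵥ* (A ^ (j - 1 - s) * B))) = 0 := by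
        refine Finset.sum_eq_zero fun j hj => ?_
        simp only [Finset.mem_Ico] at hj
        rw [ih (j - 1 - s) (by omega) (by omega), smul_zero]
      rw [hlow, zero_add] at h
      have : n - 1 - s = q := by omega
      rw [this, hdn, one_smul] at h
      exact h
  -- η = 0
  have hη0 : η = 0 := by
    apply aux_vecMul_inj_of_rank (Matrix.of fun (i : Fin n) (jl : Fin n × Fin m) =>
        (A ^ (jl.1 : ℕ) * B) i jl.2) (by rw [hctrb]; simp)
    funext jl
    simp only [Matrix.vecMul, dotProduct, Matrix.of_apply, Pi.zero_apply]
    exact congrFun (hAq (jl.1 : ℕ) jl.1.isLt) jl.2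
  -- conclude
  funext i
  rcases i with il | j
  · obtain ⟨i, l⟩ := il
    have := congrFun (hΞall (i : ℕ)) l
    rw [hΞpos i l] at this
    simpa using this
  · simpa using congrFun hη0 j

lemma output_mix {n m p K : ℕ} (A : Matrix (Fin n) (Fin n) ℝ) (B : Matrix (Fin n) (Fin m) ℝ)
    (C : Matrix (Fin p) (Fin n) ℝ) (D : Matrix (Fin p) (Fin m) ℝ)
    (x0 : Fin n → ℝ) (u : ℕ → Fin m → ℝ) (c : Fin K → ℝ) (i : ℕ) :
    outputSeq A B C D (∑ k, c k • stateSeq A B x0 u (k : ℕ))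
        (fun t => ∑ k, c k • u ((k : ℕ) + t)) i
      = ∑ k, c k • outputSeq A B C D x0 u ((k : ℕ) + i) := by
  unfold outputSeq
  rw [stateSeq_lin A B c (fun k => stateSeq A B x0 u (k : ℕ)) (fun k t => u ((k : ℕ) + t)) i]
  rw [mulVec_fin_sum, mulVec_fin_sum, ← Finset.sum_add_distrib]
  refine Finset.sum_congr rfl fun k _ => ?_
  rw [← smul_add, ← stateSeq_shift]

/-- Willems' Fundamental Lemma: if `u` is PE of order `L + n`, then for every
controllable system and every initial state, the column image of `[H_L(u); H_L(y)]` equals the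
set `𝒯_L` of all length-`L` input-output trajectories. -/
theorem stmt_14 {n m p : ℕ} (hn : 0 < n) (hm : 0 < m) (hp : 0 < p)
    (L N : ℕ) (hL : 1 ≤ L) (hN : L + n ≤ N)
    (u : ℕ → Fin m → ℝ)
    (hPE : (Matrix.of fun (il : Fin (L + n) × Fin m) (k : Fin (N - (L + n) + 1)) =>
        u ((k : ℕ) + (il.1 : ℕ)) il.2).rank = m * (L + n)) :
    ∀ (A : Matrix (Fin n) (Fin n) ℝ) (B : Matrix (Fin n) (Fin m) ℝ)
      (C : Matrix (Fin p) (Fin n) ℝ) (D : Matrix (Fin p) (Fin m) ℝ),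
      (Matrix.of fun (i : Fin n) (jl : Fin n × Fin m) =>
          (A ^ (jl.1 : ℕ) * B) i jl.2).rank = n →
      ∀ x0 : Fin n → ℝ,
        {v : (Fin L × Fin m) ⊕ (Fin L × Fin p) → ℝ |
            ∃ c : Fin (N - L + 1) → ℝ,
              (Matrix.of fun (i : (Fin L × Fin m) ⊕ (Fin L × Fin p)) (k : Fin (N - L + 1)) =>
                Sum.elim (fun il : Fin L × Fin m => u ((k : ℕ) + (il.1 : ℕ)) il.2)
                  (fun ij : Fin L × Fin p =>
                    outputSeq A B C D x0 u ((k : ℕ) + (ij.1 : ℕ)) ij.2) i).mulVec c = v} =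
          TrajSet A B C D L := by
  intro A B C D hctrb x0
  apply Set.eq_of_subset_of_subset
  · -- image ⊆ trajectories
    rintro v ⟨c, hc⟩
    refine ⟨∑ k, c k • stateSeq A B x0 u (k : ℕ), fun t => ∑ k, c k • u ((k : ℕ) + t), ?_, ?_⟩
    · intro i l
      rw [← hc]
      simp only [Matrix.mulVec, dotProduct, Matrix.of_apply, Sum.elim_inl]
      rw [Finset.sum_apply]
      refine Finset.sum_congr rfl fun k _ => ?_
      simp [mul_comm]
    · intro i j
      rw [← hc]
      simp only [Matrix.mulVec, dotProduct, Matrix.of_apply, Sum.elim_inr]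
      rw [output_mix A B C D x0 u c (i : ℕ), Finset.sum_apply]
      refine Finset.sum_congr rfl fun k _ => ?_
      simp [mul_comm]
  · -- trajectories ⊆ image
    rintro v ⟨xb, ub, hin, hout⟩
    have hsurj := aux_mulVec_surj
      (Matrix.of fun (i : (Fin L × Fin m) ⊕ Fin n) (k : Fin (N - L + 1)) =>
        Sum.elim (fun il : Fin L × Fin m => u ((k : ℕ) + (il.1 : ℕ)) il.2)
          (fun j : Fin n => stateSeq A B x0 u (k : ℕ) j) i)
      (fun w hw => kernel_lemma hL hN u A B hPE hctrb x0 w hw)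
    obtain ⟨c, hGc⟩ := hsurj (Sum.elim (fun il : Fin L × Fin m => ub (il.1 : ℕ) il.2) xb)
    have hub : ∀ (i : Fin L) (l : Fin m),
        (∑ k, c k • u ((k : ℕ) + (i : ℕ))) l = ub (i : ℕ) l := by
      intro i l
      have := congrFun hGc (Sum.inl (i, l))
      simp only [Matrix.mulVec, dotProduct, Matrix.of_apply, Sum.elim_inl] at this
      rw [Finset.sum_apply]
      rw [← this]
      refine Finset.sum_congr rfl fun k _ => ?_
      simp [mul_comm]
    have hxb : (∑ k, c k • stateSeq A B x0 u (k : ℕ)) = xb := by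
      funext j
      have := congrFun hGc (Sum.inr j)
      simp only [Matrix.mulVec, dotProduct, Matrix.of_apply, Sum.elim_inr] at this
      rw [Finset.sum_apply]
      rw [← this]
      refine Finset.sum_congr rfl fun k _ => ?_
      simp [mul_comm]
    refine ⟨c, ?_⟩
    funext x
    rcases x with il | ij
    · obtain ⟨i, l⟩ := il
      simp only [Matrix.mulVec, dotProduct, Matrix.of_apply, Sum.elim_inl]
      rw [hin i l, ← hub i l, Finset.sum_apply]
      refine Finset.sum_congr rfl fun k _ => ?_
      simp [mul_comm]
    · obtain ⟨i, j⟩ := ij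
      simp only [Matrix.mulVec, dotProduct, Matrix.of_apply, Sum.elim_inr]
      rw [hout i j]
      have hmix := congrFun (output_mix A B C D x0 u c (i : ℕ)) j
      have hstep : outputSeq A B C D xb ub (i : ℕ) j
          = outputSeq A B C D (∑ k, c k • stateSeq A B x0 u (k : ℕ))
              (fun t => ∑ k, c k • u ((k : ℕ) + t)) (i : ℕ) j := by
        unfold outputSeq
        have hs : stateSeq A B xb ub (i : ℕ)
            = stateSeq A B (∑ k, c k • stateSeq A B x0 u (k : ℕ))
                (fun t => ∑ k, c k • u ((k : ℕ) + t)) (i : ℕ) := by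
          apply stateSeq_congr
          · exact hxb.symm
          · intro t ht
            have htL : t < L := by have := i.isLt; omega
            funext l
            exact (hub ⟨t, htL⟩ l).symm
        rw [hs]
        have hui : ub (i : ℕ) = ∑ k, c k • u ((k : ℕ) + (i : ℕ)) := by
          funext l
          exact (hub i l).symm
        rw [hui]
      rw [hstep, hmix, Finset.sum_apply]
      refine Finset.sum_congr rfl fun k _ => ?_
      simp [mul_comm]
end

section
/- Let 1 ≤ L and N ≥ L + n. If the input sequence {u_k}_{k=0}^{N−1} is K_u-PE of order L + n for some symmetric positive definite K_u ∈ ℝ^{m(L+n)×m(L+n)}, then for every initial state x_0 ∈ ℝ^n, the state sequence {x_k} generated from x_0 under u satisfies [H_1(x_{[0,N−L]}); H_L(u)] [H_1(x_{[0,N−L]}); H_L(u)]^T ⪰ (1/(n+1)) Z̃ K_u Z̃^T in the Loewner order. -/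
open Matrix Finset

/-- Markov parameters `Γ̃_j` of the extended system with output `φ_k = (x_k; u_k)`:
`Γ̃_0 = D̃ = [0; I_m]` and `Γ̃_j = C̃ A^(j-1) B = [A^(j-1) B; 0]` for `j ≥ 1`. -/
noncomputable def MarkovT {n m : ℕ} (A : Matrix (Fin n) (Fin n) ℝ) (B : Matrix (Fin n) (Fin m) ℝ) :
    ℕ → Matrix (Fin n ⊕ Fin m) (Fin m) ℝ
  | 0 => Matrix.of (Sum.elim (fun _ _ => (0 : ℝ)) (fun i l => if i = l then 1 else 0))
  | j + 1 => Matrix.of (Sum.elim (fun i l => (A ^ j * B) i l) (fun _ _ => 0))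

/-- `M̃ = [M̃_n ⋯ M̃_1 M̃_0]` with `M̃_j = ∑_{q=0}^j d_{j-q} Γ̃_q`. -/
noncomputable def Mtil {n m : ℕ} (A : Matrix (Fin n) (Fin n) ℝ) (B : Matrix (Fin n) (Fin m) ℝ)
    (d : ℕ → ℝ) : Matrix (Fin n ⊕ Fin m) (Fin (n + 1) × Fin m) ℝ :=
  Matrix.of fun i jl =>
    (∑ q ∈ Finset.range ((n - (jl.1 : ℕ)) + 1),
      d ((n - (jl.1 : ℕ)) - q) • MarkovT A B q) i jl.2

/-- The Toeplitz matrix `T ∈ ℝ^{(L-1)×(L+n-1)}` with `T_{i,j} = d_{n-(j-i)}` for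
`0 ≤ j - i ≤ n` and zero otherwise. -/
noncomputable def Tmat (d : ℕ → ℝ) (n L : ℕ) : Matrix (Fin (L - 1)) (Fin (L + n - 1)) ℝ :=
  Matrix.of fun i j =>
    if (i : ℕ) ≤ (j : ℕ) ∧ (j : ℕ) ≤ (i : ℕ) + n then d (n - ((j : ℕ) - (i : ℕ))) else 0

/-- The block matrix `Z̃ = [[M̃, 0], [0, T ⊗ I_m]]`, with `M̃` occupying the first `m(n+1)`
columns and `T ⊗ I_m` occupying the last `m(L+n-1)` columns. -/
noncomputable def Ztil {n m : ℕ} (A : Matrix (Fin n) (Fin n) ℝ) (B : Matrix (Fin n) (Fin m) ℝ)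
    (d : ℕ → ℝ) (L : ℕ) :
    Matrix ((Fin n ⊕ Fin m) ⊕ (Fin (L - 1) × Fin m)) (Fin (L + n) × Fin m) ℝ :=
  Matrix.of fun i jl =>
    match i with
    | Sum.inl i' =>
        if h : (jl.1 : ℕ) ≤ n then Mtil A B d i' (⟨(jl.1 : ℕ), by omega⟩, jl.2) else 0
    | Sum.inr il' =>
        if h : 1 ≤ (jl.1 : ℕ) then
          Tmat d n L il'.1 ⟨(jl.1 : ℕ) - 1, by have := jl.1.isLt; omega⟩ *
            (if il'.2 = jl.2 then 1 else 0)
        else 0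

/-- Reindexing of `(x_k; u_{[k,k+L-1]})`-coordinates as the coordinates of the extended-output
window `(φ_k; u_{[k+1,k+L-1]})` used in `Z̃`. -/
def embed (n m L : ℕ) : Fin n ⊕ (Fin L × Fin m) → (Fin n ⊕ Fin m) ⊕ (Fin (L - 1) × Fin m) :=
  fun i =>
    match i with
    | Sum.inl i' => Sum.inl (Sum.inl i')
    | Sum.inr il =>
        if h : (il.1 : ℕ) = 0 then Sum.inl (Sum.inr il.2)
        else Sum.inr (⟨(il.1 : ℕ) - 1, by have := il.1.isLt; omega⟩, il.2)

/-- The matrix `[H_1(x_{[0,N-L]}); H_L(u)]` whose `k`-th column is `(x_k; u_{[k,k+L-1]})`. -/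
noncomputable def Hxu {n m : ℕ} (A : Matrix (Fin n) (Fin n) ℝ) (B : Matrix (Fin n) (Fin m) ℝ)
    (x0 : Fin n → ℝ) (u : ℕ → Fin m → ℝ) (L N : ℕ) :
    Matrix (Fin n ⊕ (Fin L × Fin m)) (Fin (N - L + 1)) ℝ :=
  Matrix.of fun i k =>
    Sum.elim (fun i' : Fin n => stateSeq A B x0 u (k : ℕ) i')
      (fun il : Fin L × Fin m => u ((k : ℕ) + (il.1 : ℕ)) il.2) i

open Matrix Finset

section Helpers

lemma sum_range_extend {V : Type*} [AddCommMonoid V] (g : ℕ → V) (s t : ℕ) (h : s ≤ t) :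
    ∑ j ∈ Finset.range s, g j = ∑ j ∈ Finset.range t, if j < s then g j else 0 := by
  rw [show (∑ j ∈ Finset.range t, if j < s then g j else 0)
      = ∑ j ∈ Finset.range t, if j ∈ Finset.range s then g j else 0 by
    exact Finset.sum_congr rfl fun j _ => by simp [Finset.mem_range]]
  rw [Finset.sum_ite_mem, Finset.inter_eq_right.mpr (Finset.range_subset_range.mpr h)]

lemma sum_fin_window {M : ℕ} (k n : ℕ) (h : k + n < M) (f : ℕ → ℝ) :
    (∑ j : Fin M, if k ≤ (j : ℕ) ∧ (j : ℕ) ≤ k + n then f (j : ℕ) else 0)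
      = ∑ s ∈ Finset.range (n + 1), f (k + s) := by
  rw [Fin.sum_univ_eq_sum_range (fun j => if k ≤ j ∧ j ≤ k + n then f j else 0) M]
  have hsub : Finset.Ico k (k + n + 1) ⊆ Finset.range M := by
    intro j hj; simp only [Finset.mem_Ico, Finset.mem_range] at hj ⊢; omega
  rw [show (∑ j ∈ Finset.range M, if k ≤ j ∧ j ≤ k + n then f j else 0)
      = ∑ j ∈ Finset.range M, if j ∈ Finset.Ico k (k + n + 1) then f j else 0 by
    refine Finset.sum_congr rfl fun j _ => ?_
    congr 1
    simp [Finset.mem_Ico, Nat.lt_succ_iff]]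
  rw [Finset.sum_ite_mem, Finset.inter_eq_right.mpr hsub, Finset.sum_Ico_eq_sum_range,
    show k + n + 1 - k = n + 1 from by omega]

lemma sum_ite_lt (G : ℕ → ℝ) (j n : ℕ) :
    ∑ q ∈ Finset.range (n + 1), (if j < q then G q else 0)
      = ∑ p ∈ Finset.range (n - j), G (j + 1 + p) := by
  have hsub : Finset.Ico (j + 1) (n + 1) ⊆ Finset.range (n + 1) := by
    intro t ht; simp only [Finset.mem_Ico, Finset.mem_range] at ht ⊢; omega
  rw [show (∑ q ∈ Finset.range (n + 1), if j < q then G q else 0)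
      = ∑ q ∈ Finset.range (n + 1), if q ∈ Finset.Ico (j + 1) (n + 1) then G q else 0 by
    refine Finset.sum_congr rfl fun q hq => ?_
    rw [Finset.mem_range] at hq
    congr 1
    simp only [Finset.mem_Ico, eq_iff_iff]
    omega]
  rw [Finset.sum_ite_mem, Finset.inter_eq_right.mpr hsub, Finset.sum_Ico_eq_sum_range,
    show n + 1 - (j + 1) = n - j from by omega]

end Helpers

section StateLemmas

variable {n m : ℕ} (A : Matrix (Fin n) (Fin n) ℝ) (B : Matrix (Fin n) (Fin m) ℝ)
  (x0 : Fin n → ℝ) (u : ℕ → Fin m → ℝ)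

lemma stateSeq_succ (j : ℕ) :
    stateSeq A B x0 u (j + 1) = A *ᵥ stateSeq A B x0 u j + B *ᵥ u j := rfl

lemma stateSeq_shift_s15 (k : ℕ) :
    ∀ s : ℕ, stateSeq A B x0 u (k + s) =
      (A ^ s) *ᵥ stateSeq A B x0 u k
        + ∑ q ∈ Finset.range s, ((A ^ (s - 1 - q) * B) *ᵥ u (k + q))
  | 0 => by simp
  | s + 1 => by
    have h1 : stateSeq A B x0 u (k + (s + 1))
        = A *ᵥ stateSeq A B x0 u (k + s) + B *ᵥ u (k + s) := rfl
    rw [h1, stateSeq_shift_s15 k s, Matrix.mulVec_add, Matrix.mulVec_mulVec]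
    have hsum : A *ᵥ (∑ q ∈ Finset.range s, (A ^ (s - 1 - q) * B) *ᵥ u (k + q))
        = ∑ q ∈ Finset.range s, A *ᵥ ((A ^ (s - 1 - q) * B) *ᵥ u (k + q)) := by
      have h := map_sum (Matrix.mulVecLin A)
        (fun q => (A ^ (s - 1 - q) * B) *ᵥ u (k + q)) (Finset.range s)
      simp only [Matrix.mulVecLin_apply] at h
      exact h
    rw [hsum]
    have hterm : ∀ q ∈ Finset.range s,
        A *ᵥ ((A ^ (s - 1 - q) * B) *ᵥ u (k + q)) = (A ^ (s + 1 - 1 - q) * B) *ᵥ u (k + q) := by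
      intro q hq
      rw [Finset.mem_range] at hq
      rw [Matrix.mulVec_mulVec, ← Matrix.mul_assoc, ← pow_succ',
        show s - 1 - q + 1 = s + 1 - 1 - q from by omega]
    rw [Finset.sum_congr rfl hterm, ← pow_succ', Finset.sum_range_succ]
    rw [show s + 1 - 1 - s = 0 from by omega, pow_zero, Matrix.one_mul]
    abel

lemma cayley_reflect (d : ℕ → ℝ)
    (hCayley : ∑ j ∈ Finset.range (n + 1), d j • A ^ (n - j) = 0) :
    ∑ s ∈ Finset.range (n + 1), d (n - s) • A ^ s = 0 := by
  have h := Finset.sum_range_reflect (fun j => d j • A ^ (n - j)) (n + 1)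
  rw [← hCayley, ← h]
  refine Finset.sum_congr rfl fun s hs => ?_
  rw [Finset.mem_range] at hs
  rw [show n + 1 - 1 - s = n - s from by omega, show n - (n - s) = s from by omega]

lemma contract (d : ℕ → ℝ)
    (hC0 : ∑ s ∈ Finset.range (n + 1), d (n - s) • A ^ s = 0) (v : Fin n → ℝ) (i : Fin n) :
    ∑ s ∈ Finset.range (n + 1), d (n - s) * ((A ^ s) *ᵥ v) i = 0 := by
  have h : ∑ s ∈ Finset.range (n + 1), d (n - s) * ((A ^ s) *ᵥ v) i
      = ((∑ s ∈ Finset.range (n + 1), d (n - s) • A ^ s) *ᵥ v) i := by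
    simp only [Matrix.mulVec, dotProduct, Matrix.sum_apply, Matrix.smul_apply,
      Finset.sum_mul, Finset.mul_sum, smul_eq_mul, mul_assoc]
    rw [Finset.sum_comm]
  rw [h, hC0]
  simp [Matrix.mulVec]

lemma claimR (d : ℕ → ℝ)
    (hC0 : ∑ s ∈ Finset.range (n + 1), d (n - s) • A ^ s = 0) (k : ℕ) (i' : Fin n) :
    ∑ s ∈ Finset.range (n + 1), d (n - s) * stateSeq A B x0 u (k + s) i'
      = ∑ j ∈ Finset.range (n + 1), ∑ q ∈ Finset.range (n + 1),
          (if j < q then d (n - q) * ((A ^ (q - 1 - j) * B) *ᵥ u (k + j)) i' else 0) := by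
  have h1 : ∀ s, stateSeq A B x0 u (k + s) i'
      = ((A ^ s) *ᵥ stateSeq A B x0 u k) i'
        + ∑ q ∈ Finset.range s, ((A ^ (s - 1 - q) * B) *ᵥ u (k + q)) i' := by
    intro s
    rw [stateSeq_shift_s15 A B x0 u k s]
    simp [Finset.sum_apply]
  calc ∑ s ∈ Finset.range (n + 1), d (n - s) * stateSeq A B x0 u (k + s) i'
      = ∑ s ∈ Finset.range (n + 1), (d (n - s) * ((A ^ s) *ᵥ stateSeq A B x0 u k) i'
          + ∑ q ∈ Finset.range s, d (n - s) * ((A ^ (s - 1 - q) * B) *ᵥ u (k + q)) i') := by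
        refine Finset.sum_congr rfl fun s _ => ?_
        rw [h1 s, mul_add, Finset.mul_sum]
    _ = ∑ s ∈ Finset.range (n + 1),
          ∑ q ∈ Finset.range s, d (n - s) * ((A ^ (s - 1 - q) * B) *ᵥ u (k + q)) i' := by
        rw [Finset.sum_add_distrib, contract A d hC0 _ i', zero_add]
    _ = ∑ s ∈ Finset.range (n + 1), ∑ q ∈ Finset.range (n + 1),
          (if q < s then d (n - s) * ((A ^ (s - 1 - q) * B) *ᵥ u (k + q)) i' else 0) := by
        refine Finset.sum_congr rfl fun s hs => ?_
        rw [Finset.mem_range] at hs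
        exact sum_range_extend _ s (n + 1) (by omega)
    _ = ∑ j ∈ Finset.range (n + 1), ∑ q ∈ Finset.range (n + 1),
          (if j < q then d (n - q) * ((A ^ (q - 1 - j) * B) *ᵥ u (k + j)) i' else 0) := by
        rw [Finset.sum_comm]

end StateLemmas

noncomputable def Smat (d : ℕ → ℝ) (n L N : ℕ) :
    Matrix (Fin (N - L + 1)) (Fin (N - (L + n) + 1)) ℝ :=
  Matrix.of fun j k =>
    if (k : ℕ) ≤ (j : ℕ) ∧ (j : ℕ) ≤ (k : ℕ) + n then d (n - ((j : ℕ) - (k : ℕ))) else 0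

noncomputable def HuM {m : ℕ} (u : ℕ → Fin m → ℝ) (W K : ℕ) :
    Matrix (Fin W × Fin m) (Fin K) ℝ :=
  Matrix.of fun jl k => u ((k : ℕ) + (jl.1 : ℕ)) jl.2

section Blocks

variable {n m : ℕ} (A : Matrix (Fin n) (Fin n) ℝ) (B : Matrix (Fin n) (Fin m) ℝ)

lemma blockM (d : ℕ → ℝ) (i' : Fin n) (w : Fin m → ℝ) (j : ℕ) :
    ∑ l : Fin m, (∑ q ∈ Finset.range (n - j + 1), d (n - j - q) * MarkovT A B q (Sum.inl i') l) * w l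
      = ∑ q ∈ Finset.range (n + 1),
          (if j < q then d (n - q) * ((A ^ (q - 1 - j) * B) *ᵥ w) i' else 0) := by
  rw [sum_ite_lt]
  have lhs1 : ∑ l : Fin m,
      (∑ q ∈ Finset.range (n - j + 1), d (n - j - q) * MarkovT A B q (Sum.inl i') l) * w l
      = ∑ q ∈ Finset.range (n - j + 1), ∑ l : Fin m,
          d (n - j - q) * MarkovT A B q (Sum.inl i') l * w l := by
    rw [Finset.sum_comm]
    exact Finset.sum_congr rfl fun l _ => by rw [Finset.sum_mul]
  rw [lhs1, Finset.sum_range_succ']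
  have h0 : ∑ l : Fin m, d (n - j - 0) * MarkovT A B 0 (Sum.inl i') l * w l = 0 := by
    simp [MarkovT]
  rw [h0, add_zero]
  refine Finset.sum_congr rfl fun p hp => ?_
  rw [Finset.mem_range] at hp
  have hM : ∀ l, MarkovT A B (p + 1) (Sum.inl i') l = (A ^ p * B) i' l := fun l => rfl
  rw [show j + 1 + p - 1 - j = p from by omega, show n - (j + 1 + p) = n - j - (p + 1) from by omega]
  rw [Matrix.mulVec, dotProduct, Finset.mul_sum]
  exact Finset.sum_congr rfl fun l _ => by rw [hM l, mul_assoc]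

lemma blockM0 (d : ℕ → ℝ) (l0 : Fin m) (w : Fin m → ℝ) (t : ℕ) :
    ∑ l : Fin m, (∑ q ∈ Finset.range (n - t + 1), d (n - t - q) * MarkovT A B q (Sum.inr l0) l) * w l
      = d (n - t) * w l0 := by
  have h : ∀ l : Fin m,
      (∑ q ∈ Finset.range (n - t + 1), d (n - t - q) * MarkovT A B q (Sum.inr l0) l)
        = d (n - t) * (if l0 = l then 1 else 0) := by
    intro l
    rw [Finset.sum_range_succ']
    simp [MarkovT]
  simp only [h]
  simp [mul_ite, ite_mul, Finset.sum_ite_eq]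

end Blocks

section Key

variable {n m : ℕ}

lemma key_identity (A : Matrix (Fin n) (Fin n) ℝ) (B : Matrix (Fin n) (Fin m) ℝ) (d : ℕ → ℝ)
    (hC0 : ∑ s ∈ Finset.range (n + 1), d (n - s) • A ^ s = 0)
    (L N : ℕ) (hL : 1 ≤ L) (hN : L + n ≤ N) (u : ℕ → Fin m → ℝ) (x0 : Fin n → ℝ) :
    (Ztil A B d L).submatrix (embed n m L) id * HuM u (L + n) (N - (L + n) + 1)
      = Hxu A B x0 u L N * Smat d n L N := by
  ext i k
  have hkb : (k : ℕ) + n < N - L + 1 := by have := k.isLt; omega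
  rw [Matrix.mul_apply, Matrix.mul_apply, Fintype.sum_prod_type]
  rcases i with i' | il
  · -- state row
    have step1 : ∀ j : Fin (L + n),
        (∑ l : Fin m, (Ztil A B d L).submatrix (embed n m L) id (Sum.inl i') (j, l)
            * HuM u (L + n) (N - (L + n) + 1) (j, l) k)
          = if 0 ≤ (j : ℕ) ∧ (j : ℕ) ≤ 0 + n
              then (∑ l : Fin m, (∑ q ∈ Finset.range (n - (j : ℕ) + 1),
                      d (n - (j : ℕ) - q) * MarkovT A B q (Sum.inl i') l)
                    * u ((k : ℕ) + (j : ℕ)) l)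
              else 0 := by
      intro j
      by_cases hj : (j : ℕ) ≤ n
      · rw [if_pos ⟨Nat.zero_le _, by omega⟩]
        refine Finset.sum_congr rfl fun l _ => ?_
        rw [Matrix.submatrix_apply]
        show Ztil A B d L (Sum.inl (Sum.inl i')) (j, l) * _ = _
        simp [Ztil, Mtil, HuM, hj, Matrix.sum_apply]
      · rw [if_neg (by omega)]
        refine Finset.sum_eq_zero fun l _ => ?_
        rw [Matrix.submatrix_apply]
        show Ztil A B d L (Sum.inl (Sum.inl i')) (j, l) * _ = 0
        simp [Ztil, hj]
    have step2 : ∀ j : Fin (N - L + 1),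
        Hxu A B x0 u L N (Sum.inl i') j * Smat d n L N j k
          = if (k : ℕ) ≤ (j : ℕ) ∧ (j : ℕ) ≤ (k : ℕ) + n
              then d (n - ((j : ℕ) - (k : ℕ))) * stateSeq A B x0 u (j : ℕ) i' else 0 := by
      intro j
      by_cases hc : (k : ℕ) ≤ (j : ℕ) ∧ (j : ℕ) ≤ (k : ℕ) + n
      · simp [Hxu, Smat, hc, mul_comm]
      · simp [Hxu, Smat, hc]
    have hLft : (∑ x : Fin (L + n), ∑ y : Fin m,
        (Ztil A B d L).submatrix (embed n m L) id (Sum.inl i') (x, y)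
          * HuM u (L + n) (N - (L + n) + 1) (x, y) k)
        = ∑ t ∈ Finset.range (n + 1), ∑ q ∈ Finset.range (n + 1),
            (if t < q then d (n - q) * ((A ^ (q - 1 - t) * B) *ᵥ u ((k : ℕ) + t)) i' else 0) := by
      refine (Finset.sum_congr rfl fun j _ => step1 j).trans ?_
      refine (sum_fin_window 0 n (by omega) (fun t => ∑ l : Fin m,
          (∑ q ∈ Finset.range (n - t + 1), d (n - t - q) * MarkovT A B q (Sum.inl i') l)
            * u ((k : ℕ) + t) l)).trans ?_
      refine Finset.sum_congr rfl fun t _ => ?_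
      rw [zero_add]
      exact blockM A B d i' (u ((k : ℕ) + t)) t
    have hR : (∑ j : Fin (N - L + 1), Hxu A B x0 u L N (Sum.inl i') j * Smat d n L N j k)
        = ∑ t ∈ Finset.range (n + 1), ∑ q ∈ Finset.range (n + 1),
            (if t < q then d (n - q) * ((A ^ (q - 1 - t) * B) *ᵥ u ((k : ℕ) + t)) i' else 0) := by
      refine (Finset.sum_congr rfl fun j _ => step2 j).trans ?_
      refine (sum_fin_window (k : ℕ) n hkb
        (fun t => d (n - (t - (k : ℕ))) * stateSeq A B x0 u t i')).trans ?_
      refine Eq.trans ?_ (claimR A B x0 u d hC0 (k : ℕ) i')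
      refine Finset.sum_congr rfl fun s _ => ?_
      rw [Nat.add_sub_cancel_left]
    exact hLft.trans hR.symm
  · -- input rows
    have step2 : ∀ j : Fin (N - L + 1),
        Hxu A B x0 u L N (Sum.inr il) j * Smat d n L N j k
          = if (k : ℕ) ≤ (j : ℕ) ∧ (j : ℕ) ≤ (k : ℕ) + n
              then d (n - ((j : ℕ) - (k : ℕ))) * u ((j : ℕ) + (il.1 : ℕ)) il.2 else 0 := by
      intro j
      by_cases hc : (k : ℕ) ≤ (j : ℕ) ∧ (j : ℕ) ≤ (k : ℕ) + n
      · simp [Hxu, Smat, hc, mul_comm]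
      · simp [Hxu, Smat, hc]
    have hR : (∑ j : Fin (N - L + 1), Hxu A B x0 u L N (Sum.inr il) j * Smat d n L N j k)
        = ∑ s ∈ Finset.range (n + 1), d (n - s) * u ((k : ℕ) + s + (il.1 : ℕ)) il.2 := by
      refine (Finset.sum_congr rfl fun j _ => step2 j).trans ?_
      refine (sum_fin_window (k : ℕ) n hkb
        (fun t => d (n - (t - (k : ℕ))) * u (t + (il.1 : ℕ)) il.2)).trans ?_
      refine Finset.sum_congr rfl fun s _ => ?_
      rw [Nat.add_sub_cancel_left]
    by_cases h0 : (il.1 : ℕ) = 0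
    · -- first input block row
      have he : embed n m L (Sum.inr il) = Sum.inl (Sum.inr il.2) := by
        simp [embed, h0]
      have step1 : ∀ j : Fin (L + n),
          (∑ l : Fin m, (Ztil A B d L).submatrix (embed n m L) id (Sum.inr il) (j, l)
              * HuM u (L + n) (N - (L + n) + 1) (j, l) k)
            = if 0 ≤ (j : ℕ) ∧ (j : ℕ) ≤ 0 + n
                then d (n - (j : ℕ)) * u ((k : ℕ) + (j : ℕ)) il.2 else 0 := by
        intro j
        by_cases hj : (j : ℕ) ≤ n
        · rw [if_pos ⟨Nat.zero_le _, by omega⟩]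
          refine Eq.trans ?_ (blockM0 A B d il.2 (u ((k : ℕ) + (j : ℕ))) (j : ℕ))
          refine Finset.sum_congr rfl fun l _ => ?_
          rw [Matrix.submatrix_apply, he]
          simp [Ztil, Mtil, HuM, hj, Matrix.sum_apply]
        · rw [if_neg (by omega)]
          refine Finset.sum_eq_zero fun l _ => ?_
          rw [Matrix.submatrix_apply, he]
          simp [Ztil, hj]
      refine ((Finset.sum_congr rfl fun j _ => step1 j).trans ?_).trans hR.symm
      refine (sum_fin_window 0 n (by omega)
        (fun t => d (n - t) * u ((k : ℕ) + t) il.2)).trans ?_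
      refine Finset.sum_congr rfl fun s _ => ?_
      rw [zero_add, show (k : ℕ) + s + (il.1 : ℕ) = (k : ℕ) + s from by omega]
    · -- shifted input block rows
      have hlt : (il.1 : ℕ) - 1 < L - 1 := by have := il.1.isLt; omega
      have he : embed n m L (Sum.inr il) = Sum.inr (⟨(il.1 : ℕ) - 1, hlt⟩, il.2) := by
        simp [embed, h0]
      have step1 : ∀ j : Fin (L + n),
          (∑ l : Fin m, (Ztil A B d L).submatrix (embed n m L) id (Sum.inr il) (j, l)
              * HuM u (L + n) (N - (L + n) + 1) (j, l) k)
            = if (il.1 : ℕ) ≤ (j : ℕ) ∧ (j : ℕ) ≤ (il.1 : ℕ) + n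
                then d (n - ((j : ℕ) - (il.1 : ℕ))) * u ((k : ℕ) + (j : ℕ)) il.2 else 0 := by
        intro j
        have hZ : ∀ l, (Ztil A B d L).submatrix (embed n m L) id (Sum.inr il) (j, l)
            = (if 1 ≤ (j : ℕ) then
                (if (il.1 : ℕ) - 1 ≤ (j : ℕ) - 1 ∧ (j : ℕ) - 1 ≤ (il.1 : ℕ) - 1 + n
                  then d (n - ((j : ℕ) - 1 - ((il.1 : ℕ) - 1))) else 0)
                  * (if il.2 = l then 1 else 0)
              else 0) := by
          intro l
          rw [Matrix.submatrix_apply, he]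
          simp [Ztil, Tmat]
        rw [Finset.sum_eq_single il.2
          (fun l _ hl => by rw [hZ l]; simp [Ne.symm hl])
          (fun h => absurd (Finset.mem_univ _) h)]
        rw [hZ il.2]
        simp only [if_pos rfl, mul_one]
        by_cases hc : (il.1 : ℕ) ≤ (j : ℕ) ∧ (j : ℕ) ≤ (il.1 : ℕ) + n
        · have h1j : 1 ≤ (j : ℕ) := by omega
          rw [if_pos hc, if_pos h1j, if_pos (by omega),
            show (j : ℕ) - 1 - ((il.1 : ℕ) - 1) = (j : ℕ) - (il.1 : ℕ) from by omega]
          simp [HuM]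
        · rw [if_neg hc]
          by_cases h1j : 1 ≤ (j : ℕ)
          · rw [if_pos h1j, if_neg (by omega)]
            simp
          · rw [if_neg h1j]
            simp
      have hwin : (il.1 : ℕ) + n < L + n := by have := il.1.isLt; omega
      refine ((Finset.sum_congr rfl fun j _ => step1 j).trans ?_).trans hR.symm
      refine (sum_fin_window (il.1 : ℕ) n hwin
        (fun t => d (n - (t - (il.1 : ℕ))) * u ((k : ℕ) + t) il.2)).trans ?_
      refine Finset.sum_congr rfl fun s _ => ?_
      rw [Nat.add_sub_cancel_left,
        show (k : ℕ) + ((il.1 : ℕ) + s) = (k : ℕ) + s + (il.1 : ℕ) from by omega]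

end Key

section Spsd

lemma psd_smul {α : Type*} [Fintype α] {M : Matrix α α ℝ} (hM : M.PosSemidef)
    {c : ℝ} (hc : 0 ≤ c) : (c • M).PosSemidef := by
  refine posSemidef_iff_dotProduct_mulVec.mpr ⟨?_, fun x => ?_⟩
  · have h := hM.1
    show (c • M)ᴴ = c • M
    rw [Matrix.conjTranspose_smul, h.eq, star_trivial]
  · rw [Matrix.smul_mulVec, dotProduct_smul, smul_eq_mul]
    exact mul_nonneg hc (hM.dotProduct_mulVec_nonneg x)

lemma S_psd (d : ℕ → ℝ) (n L N : ℕ) (hN : L + n ≤ N)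
    (hdnorm : ∑ j ∈ Finset.range (n + 1), d j ^ 2 = 1) :
    (((n : ℝ) + 1) • (1 : Matrix (Fin (N - L + 1)) (Fin (N - L + 1)) ℝ)
        - Smat d n L N * (Smat d n L N)ᴴ).PosSemidef := by
  have hd2 : ∑ s ∈ Finset.range (n + 1), d (n - s) ^ 2 = 1 := by
    rw [← hdnorm]
    have h := Finset.sum_range_reflect (fun j => d j ^ 2) (n + 1)
    simpa using h
  refine posSemidef_iff_dotProduct_mulVec.mpr ⟨?_, fun x => ?_⟩
  · simp [Matrix.IsHermitian, Matrix.conjTranspose_sub, Matrix.conjTranspose_smul,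
      Matrix.conjTranspose_mul]
  · -- quadratic form
    set xe : ℕ → ℝ := fun t => if h : t < N - L + 1 then x ⟨t, h⟩ else 0 with hxe
    have hxj : ∀ j : Fin (N - L + 1), xe (j : ℕ) = x j := fun j => by
      rw [hxe]; simp [j.isLt]
    set y : Fin (N - (L + n) + 1) → ℝ := fun k => ∑ j, Smat d n L N j k * x j with hy
    have hstar : star x = x := by
      funext j; simp
    rw [Matrix.sub_mulVec, dotProduct_sub, Matrix.smul_mulVec,
      Matrix.one_mulVec, dotProduct_smul, hstar]
    have hq : x ⬝ᵥ (Smat d n L N * (Smat d n L N)ᴴ) *ᵥ x = ∑ k, y k ^ 2 := by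
      rw [← Matrix.mulVec_mulVec, Matrix.dotProduct_mulVec]
      have h1 : x ᵥ* Smat d n L N = y := by
        funext k; rw [hy]; simp [Matrix.vecMul, dotProduct, mul_comm]
      have h2 : (Smat d n L N)ᴴ *ᵥ x = y := by
        funext k; rw [hy]
        simp [Matrix.mulVec, dotProduct, Matrix.conjTranspose_apply, mul_comm]
      rw [h1, h2]
      simp [dotProduct, sq]
    rw [hq]
    have hyk : ∀ k : Fin (N - (L + n) + 1),
        y k = ∑ s ∈ Finset.range (n + 1), d (n - s) * xe ((k : ℕ) + s) := by
      intro k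
      have hkb : (k : ℕ) + n < N - L + 1 := by have := k.isLt; omega
      have step : ∀ j : Fin (N - L + 1), Smat d n L N j k * x j
          = if (k : ℕ) ≤ (j : ℕ) ∧ (j : ℕ) ≤ (k : ℕ) + n
              then d (n - ((j : ℕ) - (k : ℕ))) * xe (j : ℕ) else 0 := by
        intro j
        rw [hxj j]
        by_cases hc : (k : ℕ) ≤ (j : ℕ) ∧ (j : ℕ) ≤ (k : ℕ) + n
        · simp [Smat, hc]
        · simp [Smat, hc]
      rw [hy]
      refine (Finset.sum_congr rfl fun j _ => step j).trans ?_
      refine (sum_fin_window (k : ℕ) n hkb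
        (fun t => d (n - (t - (k : ℕ))) * xe t)).trans ?_
      refine Finset.sum_congr rfl fun s _ => ?_
      rw [Nat.add_sub_cancel_left]
    have hbound : ∑ k : Fin (N - (L + n) + 1), y k ^ 2
        ≤ ((n : ℝ) + 1) * ∑ j : Fin (N - L + 1), x j ^ 2 := by
      have hcs : ∀ k : Fin (N - (L + n) + 1),
          y k ^ 2 ≤ ∑ s ∈ Finset.range (n + 1), xe ((k : ℕ) + s) ^ 2 := by
        intro k
        rw [hyk k]
        calc (∑ s ∈ Finset.range (n + 1), d (n - s) * xe ((k : ℕ) + s)) ^ 2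
            ≤ (∑ s ∈ Finset.range (n + 1), d (n - s) ^ 2)
                * ∑ s ∈ Finset.range (n + 1), xe ((k : ℕ) + s) ^ 2 :=
              Finset.sum_mul_sq_le_sq_mul_sq _ _ _
          _ = ∑ s ∈ Finset.range (n + 1), xe ((k : ℕ) + s) ^ 2 := by rw [hd2, one_mul]
      have hshift : ∀ s ∈ Finset.range (n + 1),
          ∑ k : Fin (N - (L + n) + 1), xe ((k : ℕ) + s) ^ 2
            ≤ ∑ j : Fin (N - L + 1), x j ^ 2 := by
        intro s hs
        rw [Finset.mem_range] at hs
        rw [Fin.sum_univ_eq_sum_range (fun t => xe (t + s) ^ 2) (N - (L + n) + 1)]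
        have e1 : ∑ t ∈ Finset.range (N - (L + n) + 1), xe (t + s) ^ 2
            = ∑ r ∈ Finset.Ico s (s + (N - (L + n) + 1)), xe r ^ 2 := by
          rw [Finset.sum_Ico_eq_sum_range, Nat.add_sub_cancel_left]
          exact Finset.sum_congr rfl fun t _ => by rw [add_comm]
        rw [e1]
        have e2 : ∑ r ∈ Finset.range (N - L + 1), xe r ^ 2 = ∑ j : Fin (N - L + 1), x j ^ 2 := by
          rw [← Fin.sum_univ_eq_sum_range (fun t => xe t ^ 2) (N - L + 1)]
          exact Finset.sum_congr rfl fun j _ => by rw [hxj j]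
        rw [← e2]
        refine Finset.sum_le_sum_of_subset_of_nonneg ?_ (fun r _ _ => sq_nonneg _)
        intro r hr
        simp only [Finset.mem_Ico, Finset.mem_range] at hr ⊢
        omega
      calc ∑ k : Fin (N - (L + n) + 1), y k ^ 2
          ≤ ∑ k : Fin (N - (L + n) + 1), ∑ s ∈ Finset.range (n + 1), xe ((k : ℕ) + s) ^ 2 :=
            Finset.sum_le_sum fun k _ => hcs k
        _ = ∑ s ∈ Finset.range (n + 1), ∑ k : Fin (N - (L + n) + 1), xe ((k : ℕ) + s) ^ 2 :=
            Finset.sum_comm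
        _ ≤ ∑ s ∈ Finset.range (n + 1), ∑ j : Fin (N - L + 1), x j ^ 2 :=
            Finset.sum_le_sum hshift
        _ = ((n : ℝ) + 1) * ∑ j : Fin (N - L + 1), x j ^ 2 := by
            rw [Finset.sum_const, Finset.card_range, nsmul_eq_mul]
            push_cast
            ring
    have hxx : x ⬝ᵥ x = ∑ j : Fin (N - L + 1), x j ^ 2 := by
      simp [dotProduct, sq]
    rw [smul_eq_mul, hxx]
    linarith [hbound]

end Spsd

/-- if `u` is `K_u`-PE of order `L+n`, then
`[H_1(x); H_L(u)] [H_1(x); H_L(u)]ᵀ ⪰ (1/(n+1)) Z̃ K_u Z̃ᵀ`. -/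
theorem stmt_15 {n m : ℕ} (hn : 0 < n) (hm : 0 < m)
    (A : Matrix (Fin n) (Fin n) ℝ) (B : Matrix (Fin n) (Fin m) ℝ)
    (d : ℕ → ℝ) (hd0 : d 0 ≠ 0)
    (hdnorm : ∑ j ∈ Finset.range (n + 1), d j ^ 2 = 1)
    (hCayley : ∑ j ∈ Finset.range (n + 1), d j • A ^ (n - j) = 0)
    (L N : ℕ) (hL : 1 ≤ L) (hN : L + n ≤ N)
    (u : ℕ → Fin m → ℝ)
    (Ku : Matrix (Fin (L + n) × Fin m) (Fin (L + n) × Fin m) ℝ) (hKu : Ku.PosDef)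
    (hPE : ((∑ k ∈ Finset.range (N - (L + n) + 1),
        vecMulVec (fun il : Fin (L + n) × Fin m => u (k + (il.1 : ℕ)) il.2)
          (fun il : Fin (L + n) × Fin m => u (k + (il.1 : ℕ)) il.2)) - Ku).PosSemidef) :
    ∀ x0 : Fin n → ℝ,
      (Hxu A B x0 u L N * (Hxu A B x0 u L N)ᴴ -
          ((1 : ℝ) / (n + 1)) •
            ((Ztil A B d L * Ku * (Ztil A B d L)ᴴ).submatrix (embed n m L)
              (embed n m L))).PosSemidef := by
  intro x0
  set Z' := (Ztil A B d L).submatrix (embed n m L) id with hZ'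
  set Hu := HuM u (L + n) (N - (L + n) + 1) with hHu
  set Hx := Hxu A B x0 u L N with hHx
  set S := Smat d n L N with hS
  set c : ℝ := (1 : ℝ) / (n + 1) with hc
  have hc0 : (0 : ℝ) ≤ c := by rw [hc]; positivity
  -- PE hypothesis in matrix form
  have hHuHu : (∑ k ∈ Finset.range (N - (L + n) + 1),
      vecMulVec (fun il : Fin (L + n) × Fin m => u (k + (il.1 : ℕ)) il.2)
        (fun il : Fin (L + n) × Fin m => u (k + (il.1 : ℕ)) il.2)) = Hu * Huᴴ := by
    ext a b
    rw [Matrix.sum_apply, Matrix.mul_apply]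
    calc ∑ k ∈ Finset.range (N - (L + n) + 1),
          vecMulVec (fun il : Fin (L + n) × Fin m => u (k + (il.1 : ℕ)) il.2)
            (fun il : Fin (L + n) × Fin m => u (k + (il.1 : ℕ)) il.2) a b
        = ∑ k ∈ Finset.range (N - (L + n) + 1),
            u (k + (a.1 : ℕ)) a.2 * u (k + (b.1 : ℕ)) b.2 :=
          Finset.sum_congr rfl fun t _ => by simp [Matrix.vecMulVec_apply]
      _ = ∑ j : Fin (N - (L + n) + 1),
            u ((j : ℕ) + (a.1 : ℕ)) a.2 * u ((j : ℕ) + (b.1 : ℕ)) b.2 :=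
          (Fin.sum_univ_eq_sum_range
            (fun t => u (t + (a.1 : ℕ)) a.2 * u (t + (b.1 : ℕ)) b.2) _).symm
      _ = ∑ j : Fin (N - (L + n) + 1), Hu a j * Huᴴ j b :=
          Finset.sum_congr rfl fun j _ => by
            simp [hHu, HuM, Matrix.conjTranspose_apply]
  rw [hHuHu] at hPE
  -- key identity
  have hC0 := cayley_reflect A d hCayley
  have hkey : Z' * Hu = Hx * S := key_identity A B d hC0 L N hL hN u x0
  -- submatrix rewriting
  have hSub : (Ztil A B d L * Ku * (Ztil A B d L)ᴴ).submatrix (embed n m L) (embed n m L)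
      = Z' * Ku * Z'ᴴ := by
    ext i j
    simp [Matrix.mul_apply, Matrix.submatrix_apply, Matrix.conjTranspose_apply, hZ']
  rw [hSub]
  -- PSD ingredients
  have h1 : (Z' * (Hu * Huᴴ - Ku) * Z'ᴴ).PosSemidef :=
    hPE.mul_mul_conjTranspose_same Z'
  have h2 : (Hx * (((n : ℝ) + 1) • (1 : Matrix (Fin (N - L + 1)) (Fin (N - L + 1)) ℝ)
      - S * Sᴴ) * Hxᴴ).PosSemidef :=
    (S_psd d n L N hN hdnorm).mul_mul_conjTranspose_same Hx
  -- algebraic decomposition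
  have e1 : Z' * (Hu * Huᴴ - Ku) * Z'ᴴ = Hx * (S * Sᴴ) * Hxᴴ - Z' * Ku * Z'ᴴ := by
    rw [Matrix.mul_sub, Matrix.sub_mul]
    congr 1
    calc Z' * (Hu * Huᴴ) * Z'ᴴ = (Z' * Hu) * (Z' * Hu)ᴴ := by
          simp only [Matrix.conjTranspose_mul, Matrix.mul_assoc]
      _ = Hx * (S * Sᴴ) * Hxᴴ := by
          rw [hkey]
          simp only [Matrix.conjTranspose_mul, Matrix.mul_assoc]
  have e2 : Hx * (((n : ℝ) + 1) • (1 : Matrix (Fin (N - L + 1)) (Fin (N - L + 1)) ℝ)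
        - S * Sᴴ) * Hxᴴ
      = ((n : ℝ) + 1) • (Hx * Hxᴴ) - Hx * (S * Sᴴ) * Hxᴴ := by
    rw [Matrix.mul_sub, Matrix.sub_mul]
    congr 1
    rw [Matrix.mul_smul, Matrix.mul_one, Matrix.smul_mul]
  have hone : c * ((n : ℝ) + 1) = 1 := by
    rw [hc]
    field_simp
  have decomp : Hx * Hxᴴ - c • (Z' * Ku * Z'ᴴ)
      = c • (Z' * (Hu * Huᴴ - Ku) * Z'ᴴ)
        + c • (Hx * (((n : ℝ) + 1) • (1 : Matrix (Fin (N - L + 1)) (Fin (N - L + 1)) ℝ)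
            - S * Sᴴ) * Hxᴴ) := by
    rw [e1, e2, smul_sub, smul_sub, smul_smul, hone, one_smul]
    abel
  rw [decomp]
  exact (psd_smul h1 hc0).add (psd_smul h2 hc0)
end

section
/- Let 1 ≤ L and N ≥ L + n, let the input sequence {u_k}_{k=0}^{N−1} be K_u-PE of order L + n for some symmetric positive definite K_u ∈ ℝ^{m(L+n)×m(L+n)}, and let Ẑ be any matrix of the same dimensions as Z̃ with ‖Ẑ − Z̃‖_2 ≤ ε (spectral norm) for some ε > 0. Then for every initial state x_0 ∈ ℝ^n, the state sequence {x_k} generated from x_0 under u satisfies [H_1(x_{[0,N−L]}); H_L(u)] [H_1(x_{[0,N−L]}); H_L(u)]^T ⪰ (1/(2(n+1))) Ẑ K_u Ẑ^T − (ε²/(n+1)) σ_max(K_u) I in the Loewner order, where σ_max denotes the maximum singular value. -/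
open Matrix Finset

/-- The set of (real) eigenvalues of a square matrix. -/
def eigSet {k : Type} [Fintype k] (A : Matrix k k ℝ) : Set ℝ :=
  {t : ℝ | ∃ v : k → ℝ, v ≠ 0 ∧ A.mulVec v = t • v}

/-- Maximum (real) eigenvalue `λ_max` of a square matrix. -/
noncomputable def lamMax {k : Type} [Fintype k] (A : Matrix k k ℝ) : ℝ :=
  sSup (eigSet A)

/-- Maximum singular value `σ_max(A) = √(λ_max(Aᵀ A))`. -/
noncomputable def sigmaMax {k l : Type} [Fintype k] [Fintype l] (A : Matrix k l ℝ) : ℝ :=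
  Real.sqrt (lamMax (Aᴴ * A))

/-- Euclidean norm of a finitely supported vector. -/
noncomputable def enorm' {k : Type} [Fintype k] (v : k → ℝ) : ℝ :=
  Real.sqrt (∑ i, v i ^ 2)


section Helpers
open Matrix Finset

variable {ι κ : Type} [Fintype ι] [Fintype κ]

lemma enorm_nonneg' (v : ι → ℝ) : 0 ≤ enorm' v := Real.sqrt_nonneg _

lemma enorm_sq (v : ι → ℝ) : enorm' v ^ 2 = ∑ i, v i ^ 2 :=
  Real.sq_sqrt (Finset.sum_nonneg fun i _ => sq_nonneg _)

lemma dotProduct_le_enorm (v w : ι → ℝ) : v ⬝ᵥ w ≤ enorm' v * enorm' w := by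
  simpa [enorm', dotProduct] using Real.sum_mul_le_sqrt_mul_sqrt univ v w

lemma vecMul_enorm_le {E : Matrix ι κ ℝ} {ε : ℝ} (hε : 0 ≤ ε)
    (h : ∀ x : κ → ℝ, enorm' (E *ᵥ x) ≤ ε * enorm' x) (v : ι → ℝ) :
    enorm' (v ᵥ* E) ≤ ε * enorm' v := by
  set w := v ᵥ* E with hw
  have h1 : enorm' w ^ 2 = v ⬝ᵥ (E *ᵥ w) := by
    rw [enorm_sq, dotProduct_mulVec, ← hw]
    simp [dotProduct, sq]
  have h2 : v ⬝ᵥ (E *ᵥ w) ≤ enorm' v * (ε * enorm' w) :=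
    le_trans (dotProduct_le_enorm _ _)
      (mul_le_mul_of_nonneg_left (h w) (enorm_nonneg' v))
  rcases eq_or_lt_of_le (enorm_nonneg' w) with h0 | h0
  · rw [← h0]; exact mul_nonneg hε (enorm_nonneg' v)
  · nlinarith [h1 ▸ h2]

variable [DecidableEq ι] [Nonempty ι]

/-- max of the Hermitian eigenvalues -/
noncomputable def mumax (M : Matrix ι ι ℝ) (hM : M.IsHermitian) : ℝ :=
  Finset.univ.sup' Finset.univ_nonempty hM.eigenvalues

omit [Fintype ι] [DecidableEq ι] [Nonempty ι] in
lemma star_matrix_real (U : Matrix ι ι ℝ) : (star U : Matrix ι ι ℝ) = Uᵀ := by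
  ext i j; simp [Matrix.star_apply]

lemma rayleigh (M : Matrix ι ι ℝ) (hM : M.IsHermitian) (v : ι → ℝ) :
    v ⬝ᵥ (M *ᵥ v) ≤ mumax M hM * (v ⬝ᵥ v) := by
  classical
  set U : Matrix ι ι ℝ := (hM.eigenvectorUnitary : Matrix ι ι ℝ) with hUdef
  have hU : U * star U = 1 := (Matrix.mem_unitaryGroup_iff).mp hM.eigenvectorUnitary.2
  set w : ι → ℝ := star U *ᵥ v with hwdef
  have hvecMul : v ᵥ* U = w := by
    rw [hwdef, star_matrix_real, mulVec_transpose]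
  have hdot : v ⬝ᵥ (M *ᵥ v) = ∑ i, hM.eigenvalues i * w i ^ 2 := by
    conv_lhs => rw [hM.spectral_theorem, Unitary.conjStarAlgAut_apply]
    rw [← mulVec_mulVec, ← mulVec_mulVec, dotProduct_mulVec, hvecMul]
    simp only [dotProduct, mulVec_diagonal]
    refine Finset.sum_congr rfl fun i _ => ?_
    simp [RCLike.ofReal]
    ring
  have h3 : w ᵥ* star U = v := by
    rw [star_matrix_real, vecMul_transpose, hwdef, mulVec_mulVec, hU, one_mulVec]
  have hww : w ⬝ᵥ w = v ⬝ᵥ v := by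
    calc w ⬝ᵥ w = w ⬝ᵥ (star U *ᵥ v) := by rw [← hwdef]
      _ = (w ᵥ* star U) ⬝ᵥ v := dotProduct_mulVec _ _ _
      _ = v ⬝ᵥ v := by rw [h3]
  rw [hdot, ← hww]
  have hle : ∑ i, hM.eigenvalues i * w i ^ 2 ≤ ∑ i, mumax M hM * w i ^ 2 :=
    Finset.sum_le_sum fun i _ =>
      mul_le_mul_of_nonneg_right (Finset.le_sup' _ (mem_univ i)) (sq_nonneg _)
  refine hle.trans_eq ?_
  rw [← Finset.mul_sum, dotProduct]
  congr 1
  exact Finset.sum_congr rfl fun i _ => (sq (w i)).symm ▸ (pow_two (w i)) ▸ rfl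

lemma mumax_mem_eigSet (M : Matrix ι ι ℝ) (hM : M.IsHermitian) :
    mumax M hM ∈ eigSet M := by
  obtain ⟨i, -, hi⟩ := Finset.exists_mem_eq_sup' (Finset.univ_nonempty (α := ι)) hM.eigenvalues
  refine ⟨⇑(hM.eigenvectorBasis i), ?_, ?_⟩
  · intro h
    exact hM.eigenvectorBasis.orthonormal.ne_zero i (by ext j; exact congrFun h j)
  · rw [hM.mulVec_eigenvectorBasis]
    simp only [mumax]
    rw [hi]

lemma eig_le_mumax (M : Matrix ι ι ℝ) (hM : M.IsHermitian) :
    ∀ t ∈ eigSet M, t ≤ mumax M hM := by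
  rintro t ⟨v, hv0, hv⟩
  have hvv : 0 < v ⬝ᵥ v := by
    obtain ⟨i, hi⟩ := Function.ne_iff.mp hv0
    exact Finset.sum_pos' (fun j _ => mul_self_nonneg _)
      ⟨i, mem_univ i, mul_self_pos.mpr hi⟩
  have h1 : t * (v ⬝ᵥ v) ≤ mumax M hM * (v ⬝ᵥ v) := by
    have := rayleigh M hM v
    rwa [hv, dotProduct_smul, smul_eq_mul] at this
  exact le_of_mul_le_mul_right h1 hvv

lemma lamMax_eq (M : Matrix ι ι ℝ) (hM : M.IsHermitian) : lamMax M = mumax M hM :=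
  le_antisymm (csSup_le ⟨_, mumax_mem_eigSet M hM⟩ (eig_le_mumax M hM))
    (le_csSup ⟨mumax M hM, eig_le_mumax M hM⟩ (mumax_mem_eigSet M hM))

lemma quad_le_sigmaMax {Ku : Matrix ι ι ℝ} (hKu : Ku.PosDef) (w : ι → ℝ) :
    w ⬝ᵥ (Ku *ᵥ w) ≤ sigmaMax Ku * (w ⬝ᵥ w) := by
  have hH : Ku.IsHermitian := hKu.1
  set μ := mumax Ku hH with hμ
  have hμ0 : 0 ≤ μ := by
    obtain i := Classical.arbitrary ι
    exact le_trans (hKu.eigenvalues_pos i).le (Finset.le_sup' _ (mem_univ i))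
  have hHsq : (Ku * Ku).IsHermitian := by
    unfold Matrix.IsHermitian
    rw [conjTranspose_mul, hH]
  have hmem : μ ^ 2 ∈ eigSet (Ku * Ku) := by
    obtain ⟨v, hv0, hv⟩ := mumax_mem_eigSet Ku hH
    exact ⟨v, hv0, by rw [← mulVec_mulVec, hv, mulVec_smul, hv, smul_smul, sq]⟩
  have hbdd : μ ^ 2 ≤ lamMax (Ku * Ku) :=
    le_csSup ⟨mumax _ hHsq, eig_le_mumax _ hHsq⟩ hmem
  have hσ : μ ≤ sigmaMax Ku := by
    have hs : sigmaMax Ku = Real.sqrt (lamMax (Ku * Ku)) := by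
      unfold sigmaMax
      rw [show Kuᴴ = Ku from hH]
    calc μ = Real.sqrt (μ ^ 2) := (Real.sqrt_sq hμ0).symm
      _ ≤ _ := Real.sqrt_le_sqrt hbdd
      _ = sigmaMax Ku := hs.symm
  have hww : 0 ≤ w ⬝ᵥ w := Finset.sum_nonneg fun i _ => mul_self_nonneg _
  exact (rayleigh Ku hH w).trans (mul_le_mul_of_nonneg_right hσ hww)

end Helpers

section Core
open Matrix Finset

lemma dot_sum_mulVec {ι : Type} [Fintype ι] {κ' : Type} (s : Finset κ')
    (M : κ' → Matrix ι ι ℝ) (x : ι → ℝ) :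
    x ⬝ᵥ ((∑ k ∈ s, M k) *ᵥ x) = ∑ k ∈ s, x ⬝ᵥ (M k *ᵥ x) := by
  induction s using Finset.cons_induction with
  | empty => simp
  | cons k s hk ih => rw [Finset.sum_cons, Finset.sum_cons, ← ih, add_mulVec, dotProduct_add]

lemma dot_vecMulVec {ι : Type} [Fintype ι] (a x : ι → ℝ) :
    x ⬝ᵥ ((vecMulVec a a) *ᵥ x) = (a ⬝ᵥ x) ^ 2 := by
  have hrhs : (a ⬝ᵥ x) ^ 2 = ∑ i, ∑ j, (a i * x i) * (a j * x j) := by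
    rw [sq, dotProduct, Finset.sum_mul_sum]
  rw [hrhs]
  simp only [dotProduct, mulVec, vecMulVec_apply, Finset.mul_sum]
  exact Finset.sum_congr rfl fun i _ => Finset.sum_congr rfl fun j _ => by ring

lemma state_formula {n m : ℕ} (A : Matrix (Fin n) (Fin n) ℝ) (B : Matrix (Fin n) (Fin m) ℝ)
    (x0 : Fin n → ℝ) (u : ℕ → Fin m → ℝ) (k r : ℕ) :
    stateSeq A B x0 u (k + r) =
      (A ^ r).mulVec (stateSeq A B x0 u k) +
        ∑ s ∈ range r, ((A ^ (r - 1 - s) * B).mulVec (u (k + s))) := by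
  induction r with
  | zero => simp [stateSeq]
  | succ r ih =>
      have hkr : k + (r + 1) = (k + r) + 1 := by omega
      rw [hkr]
      show A.mulVec (stateSeq A B x0 u (k + r)) + B.mulVec (u (k + r)) = _
      rw [ih, mulVec_add, mulVec_mulVec, ← pow_succ']
      rw [Finset.sum_range_succ]
      have h1 : A *ᵥ (∑ s ∈ range r, (A ^ (r - 1 - s) * B) *ᵥ u (k + s)) =
          ∑ s ∈ range r, (A ^ (r + 1 - 1 - s) * B) *ᵥ u (k + s) := by
        rw [show (A *ᵥ (∑ s ∈ range r, (A ^ (r - 1 - s) * B) *ᵥ u (k + s))) =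
            A.mulVecLin (∑ s ∈ range r, (A ^ (r - 1 - s) * B) *ᵥ u (k + s)) from rfl,
          map_sum]
        refine Finset.sum_congr rfl fun s hs => ?_
        have hs' : s < r := mem_range.mp hs
        rw [mulVecLin_apply, mulVec_mulVec, ← Matrix.mul_assoc, ← pow_succ']
        have he : r - 1 - s + 1 = r + 1 - 1 - s := by omega
        rw [he]
      rw [h1]
      have h2 : (A ^ (r + 1 - 1 - r) * B) *ᵥ u (k + r) = B *ᵥ u (k + r) := by
        have : r + 1 - 1 - r = 0 := by omega
        rw [this, pow_zero, Matrix.one_mul]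
      rw [h2]
      abel

end Core

section CoreId
open Matrix Finset

lemma sum_mulVec_apply {a b : ℕ} {γ : Type} (s : Finset γ) (M : γ → Matrix (Fin a) (Fin b) ℝ)
    (x : Fin b → ℝ) (i : Fin a) :
    ((∑ r ∈ s, M r) *ᵥ x) i = ∑ r ∈ s, (M r *ᵥ x) i := by
  induction s using Finset.cons_induction with
  | empty => simp
  | cons k s hk ih => rw [Finset.sum_cons, Finset.sum_cons, add_mulVec, Pi.add_apply, ih]

lemma core_id {n m : ℕ} (A : Matrix (Fin n) (Fin n) ℝ) (B : Matrix (Fin n) (Fin m) ℝ)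
    (d : ℕ → ℝ)
    (hCayley : ∑ j ∈ Finset.range (n + 1), d j • A ^ (n - j) = 0)
    (L : ℕ) (hL : 1 ≤ L) (x0 : Fin n → ℝ) (u : ℕ → Fin m → ℝ) (k : ℕ)
    (i : Fin n ⊕ (Fin L × Fin m)) :
    ∑ jl : Fin (L + n) × Fin m,
        Ztil A B d L (embed n m L i) jl * u (k + (jl.1 : ℕ)) jl.2
      = ∑ r ∈ range (n + 1),
          d (n - r) *
            Sum.elim (stateSeq A B x0 u (k + r))
              (fun il : Fin L × Fin m => u (k + r + (il.1 : ℕ)) il.2) i := by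
  rw [Fintype.sum_prod_type]
  match i with
  | Sum.inl i' =>
    -- state rows
    have hz : ∀ j : Fin (L + n),
        ∑ l, Ztil A B d L (embed n m L (Sum.inl i')) (j, l) * u (k + (j : ℕ)) l
          = if (j : ℕ) ≤ n then
              ∑ q ∈ range (n - (j : ℕ)),
                d (n - (j : ℕ) - (q + 1)) * ((A ^ q * B) *ᵥ u (k + (j : ℕ))) i'
            else 0 := by
      intro j
      by_cases hj : (j : ℕ) ≤ n
      · rw [if_pos hj]
        have hZ : ∀ l, Ztil A B d L (embed n m L (Sum.inl i')) (j, l)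
            = ∑ q ∈ range (n - (j : ℕ)), d (n - (j : ℕ) - (q + 1)) * (A ^ q * B) i' l := by
          intro l
          show (if h : ((j : ℕ)) ≤ n then
              Mtil A B d (Sum.inl i') (⟨(j : ℕ), by omega⟩, l) else 0) = _
          rw [dif_pos hj]
          show (∑ q ∈ range ((n - (j : ℕ)) + 1), d ((n - (j : ℕ)) - q) • MarkovT A B q)
              (Sum.inl i') l = _
          rw [Matrix.sum_apply, Finset.sum_range_succ']
          have h0 : (d (n - (j : ℕ) - 0) • MarkovT A B 0) (Sum.inl i') l = 0 := by
            simp [MarkovT]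
          rw [h0, add_zero]
          refine Finset.sum_congr rfl fun q _ => ?_
          simp [MarkovT, Nat.sub_sub]
        calc ∑ l, Ztil A B d L (embed n m L (Sum.inl i')) (j, l) * u (k + (j : ℕ)) l
            = ∑ l, ∑ q ∈ range (n - (j : ℕ)),
                d (n - (j : ℕ) - (q + 1)) * (A ^ q * B) i' l * u (k + (j : ℕ)) l := by
              refine Finset.sum_congr rfl fun l _ => ?_
              rw [hZ l, Finset.sum_mul]
          _ = ∑ q ∈ range (n - (j : ℕ)),
                d (n - (j : ℕ) - (q + 1)) * ((A ^ q * B) *ᵥ u (k + (j : ℕ))) i' := by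
              rw [Finset.sum_comm]
              refine Finset.sum_congr rfl fun q _ => ?_
              rw [mulVec, dotProduct, Finset.mul_sum]
              exact Finset.sum_congr rfl fun l _ => by ring
      · rw [if_neg hj]
        refine Finset.sum_eq_zero fun l _ => ?_
        show (if h : ((j : ℕ)) ≤ n then
            Mtil A B d (Sum.inl i') (⟨(j : ℕ), by omega⟩, l) else 0) * u (k + (j : ℕ)) l = 0
        rw [dif_neg hj, zero_mul]
    rw [Finset.sum_congr rfl fun j _ => hz j]
    rw [Fin.sum_univ_eq_sum_range (fun j => if j ≤ n then
        ∑ q ∈ range (n - j), d (n - j - (q + 1)) * ((A ^ q * B) *ᵥ u (k + j)) i' else 0) (L + n)]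
    rw [← Finset.sum_subset (Finset.range_subset_range.mpr (by omega : n + 1 ≤ L + n))
        (fun j _ hj => if_neg (by rw [Finset.mem_range, not_lt] at hj; omega))]
    rw [Finset.sum_congr rfl fun j hj => if_pos (by rw [Finset.mem_range] at hj; omega)]
    -- now the RHS
    have hrhs : ∀ r ∈ range (n + 1),
        d (n - r) * Sum.elim (stateSeq A B x0 u (k + r))
            (fun il : Fin L × Fin m => u (k + r + (il.1 : ℕ)) il.2) (Sum.inl i')
          = d (n - r) * ((A ^ r) *ᵥ stateSeq A B x0 u k) i'
            + ∑ s ∈ range r, d (n - r) * ((A ^ (r - 1 - s) * B) *ᵥ u (k + s)) i' := by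
      intro r _
      rw [Sum.elim_inl, state_formula, Pi.add_apply, mul_add, Finset.sum_apply, Finset.mul_sum]
    rw [Finset.sum_congr rfl hrhs, Finset.sum_add_distrib]
    have hzero : ∑ r ∈ range (n + 1), d (n - r) * ((A ^ r) *ᵥ stateSeq A B x0 u k) i' = 0 := by
      have hmat : ∑ r ∈ range (n + 1), d (n - r) • A ^ r = 0 := by
        have hrefl := Finset.sum_range_reflect (fun j => d j • A ^ (n - j)) (n + 1)
        rw [hCayley] at hrefl
        rw [← hrefl]
        refine Finset.sum_congr rfl fun r hr => ?_
        rw [Finset.mem_range] at hr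
        have e1 : n + 1 - 1 - r = n - r := by omega
        have e2 : n - (n - r) = r := by omega
        rw [e1, e2]
      have : ∑ r ∈ range (n + 1), d (n - r) * ((A ^ r) *ᵥ stateSeq A B x0 u k) i'
          = ((∑ r ∈ range (n + 1), d (n - r) • A ^ r) *ᵥ stateSeq A B x0 u k) i' := by
        rw [sum_mulVec_apply]
        refine Finset.sum_congr rfl fun r _ => ?_
        rw [smul_mulVec, Pi.smul_apply, smul_eq_mul]
      rw [this, hmat, zero_mulVec]
      rfl
    rw [hzero, zero_add]
    -- double sum bijection
    rw [Finset.sum_sigma', Finset.sum_sigma']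
    refine Finset.sum_nbij' (i := fun p => (⟨p.1 + p.2 + 1, p.1⟩ : Σ _ : ℕ, ℕ))
      (j := fun p => (⟨p.2, p.1 - 1 - p.2⟩ : Σ _ : ℕ, ℕ)) ?_ ?_ ?_ ?_ ?_
    · rintro ⟨j, q⟩ hp
      simp only [Finset.mem_sigma, Finset.mem_range] at hp ⊢
      exact ⟨by omega, by omega⟩
    · rintro ⟨r, s⟩ hp
      simp only [Finset.mem_sigma, Finset.mem_range] at hp ⊢
      exact ⟨by omega, by omega⟩
    · rintro ⟨j, q⟩ hp
      simp only [Finset.mem_sigma, Finset.mem_range] at hp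
      simp only [Sigma.mk.inj_iff, heq_eq_eq]
      refine ⟨?_, ?_⟩ <;> first | trivial | omega
    · rintro ⟨r, s⟩ hp
      simp only [Finset.mem_sigma, Finset.mem_range] at hp
      simp only [Sigma.mk.inj_iff, heq_eq_eq]
      refine ⟨?_, ?_⟩ <;> first | trivial | omega
    · rintro ⟨j, q⟩ hp
      simp only [Finset.mem_sigma, Finset.mem_range] at hp
      have e1 : n - j - (q + 1) = n - (j + q + 1) := by omega
      have e2 : q = j + q + 1 - 1 - j := by omega
      rw [e1]
      congr 1
      rw [← e2]
  | Sum.inr tl =>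
    obtain ⟨t, l0⟩ := tl
    by_cases ht : (t : ℕ) = 0
    · -- first input row block
      have hemb : embed n m L (Sum.inr (t, l0)) = Sum.inl (Sum.inr l0) := by
        simp [embed, ht]
      rw [hemb]
      have hz : ∀ j : Fin (L + n),
          ∑ l, Ztil A B d L (Sum.inl (Sum.inr l0)) (j, l) * u (k + (j : ℕ)) l
            = if (j : ℕ) ≤ n then d (n - (j : ℕ)) * u (k + (j : ℕ)) l0 else 0 := by
        intro j
        by_cases hj : (j : ℕ) ≤ n
        · rw [if_pos hj]
          have hZ : ∀ l, Ztil A B d L (Sum.inl (Sum.inr l0)) (j, l)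
              = d (n - (j : ℕ)) * (if l0 = l then 1 else 0) := by
            intro l
            show (if h : ((j : ℕ)) ≤ n then
                Mtil A B d (Sum.inr l0) (⟨(j : ℕ), by omega⟩, l) else 0) = _
            rw [dif_pos hj]
            show (∑ q ∈ range ((n - (j : ℕ)) + 1), d ((n - (j : ℕ)) - q) • MarkovT A B q)
                (Sum.inr l0) l = _
            rw [Matrix.sum_apply, Finset.sum_range_succ']
            have h1 : ∀ q ∈ range (n - (j : ℕ)),
                (d (n - (j : ℕ) - (q + 1)) • MarkovT A B (q + 1)) (Sum.inr l0) l = 0 := by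
              intro q _
              simp [MarkovT]
            rw [Finset.sum_congr rfl h1, Finset.sum_const_zero, zero_add]
            simp [MarkovT]
          rw [Finset.sum_congr rfl fun l _ => by rw [hZ l]]
          simp [mul_ite, ite_mul, Finset.sum_ite_eq]
        · rw [if_neg hj]
          refine Finset.sum_eq_zero fun l _ => ?_
          show (if h : ((j : ℕ)) ≤ n then
              Mtil A B d (Sum.inr l0) (⟨(j : ℕ), by omega⟩, l) else 0) * u (k + (j : ℕ)) l = 0
          rw [dif_neg hj, zero_mul]
      rw [Finset.sum_congr rfl fun j _ => hz j]
      rw [Fin.sum_univ_eq_sum_range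
        (fun j => if j ≤ n then d (n - j) * u (k + j) l0 else 0) (L + n)]
      rw [← Finset.sum_subset (Finset.range_subset_range.mpr (by omega : n + 1 ≤ L + n))
          (fun j _ hj => if_neg (by rw [Finset.mem_range, not_lt] at hj; omega))]
      rw [Finset.sum_congr rfl fun j hj => if_pos (by rw [Finset.mem_range] at hj; omega)]
      refine Finset.sum_congr rfl fun r _ => ?_
      rw [Sum.elim_inr, ht, add_zero]
    · -- Toeplitz rows
      have hemb : embed n m L (Sum.inr (t, l0))
          = Sum.inr (⟨(t : ℕ) - 1, by have := t.isLt; omega⟩, l0) := by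
        simp [embed, ht]
      rw [hemb]
      have ht1 : 1 ≤ (t : ℕ) := by omega
      have hz : ∀ j : Fin (L + n),
          ∑ l, Ztil A B d L (Sum.inr (⟨(t : ℕ) - 1, by have := t.isLt; omega⟩, l0)) (j, l)
              * u (k + (j : ℕ)) l
            = if (t : ℕ) ≤ (j : ℕ) ∧ (j : ℕ) ≤ (t : ℕ) + n then
                d (n - ((j : ℕ) - (t : ℕ))) * u (k + (j : ℕ)) l0 else 0 := by
        intro j
        have hZ : ∀ l, Ztil A B d L (Sum.inr (⟨(t : ℕ) - 1, by have := t.isLt; omega⟩, l0)) (j, l)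
            = (if (t : ℕ) ≤ (j : ℕ) ∧ (j : ℕ) ≤ (t : ℕ) + n then d (n - ((j : ℕ) - (t : ℕ)))
                else 0) * (if l0 = l then 1 else 0) := by
          intro l
          show (if h : 1 ≤ (j : ℕ) then
              Tmat d n L ⟨(t : ℕ) - 1, by have := t.isLt; omega⟩
                  ⟨(j : ℕ) - 1, by have := j.isLt; omega⟩ *
                (if l0 = l then 1 else 0)
            else 0) = _
          by_cases h1 : 1 ≤ (j : ℕ)
          · rw [dif_pos h1]
            show (if ((t : ℕ) - 1 ≤ (j : ℕ) - 1 ∧ (j : ℕ) - 1 ≤ ((t : ℕ) - 1) + n) then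
                d (n - (((j : ℕ) - 1) - ((t : ℕ) - 1))) else 0) * _ = _
            congr 1
            by_cases h2 : (t : ℕ) ≤ (j : ℕ) ∧ (j : ℕ) ≤ (t : ℕ) + n
            · rw [if_pos (by omega), if_pos h2]
              congr 1
              omega
            · rw [if_neg (by omega), if_neg h2]
          · rw [dif_neg h1]
            rw [if_neg (by omega), zero_mul]
        rw [Finset.sum_congr rfl fun l _ => by rw [hZ l]]
        by_cases h2 : (t : ℕ) ≤ (j : ℕ) ∧ (j : ℕ) ≤ (t : ℕ) + n
        · rw [if_pos h2]
          simp [mul_ite, ite_mul, Finset.sum_ite_eq, if_pos h2]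
        · rw [if_neg h2]
          simp [if_neg h2]
      rw [Finset.sum_congr rfl fun j _ => hz j]
      rw [Fin.sum_univ_eq_sum_range
        (fun j => if (t : ℕ) ≤ j ∧ j ≤ (t : ℕ) + n then
          d (n - (j - (t : ℕ))) * u (k + j) l0 else 0) (L + n)]
      have hsub : Finset.Ico (t : ℕ) ((t : ℕ) + n + 1) ⊆ Finset.range (L + n) := by
        intro x hx
        rw [Finset.mem_Ico] at hx
        rw [Finset.mem_range]
        have := t.isLt
        omega
      rw [← Finset.sum_subset hsub (fun j _ hj => if_neg (by rw [Finset.mem_Ico] at hj; omega))]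
      rw [Finset.sum_congr rfl fun j hj => if_pos (by rw [Finset.mem_Ico] at hj; omega)]
      rw [Finset.sum_Ico_eq_sum_range]
      have hcount : (t : ℕ) + n + 1 - (t : ℕ) = n + 1 := by omega
      rw [hcount]
      refine Finset.sum_congr rfl fun r _ => ?_
      rw [Sum.elim_inr]
      have e1 : n - ((t : ℕ) + r - (t : ℕ)) = n - r := by omega
      have e2 : k + ((t : ℕ) + r) = k + r + (t : ℕ) := by omega
      rw [e1, e2]

end CoreId

section MainAux
open Matrix Finset

lemma conjT_real {ι κ : Type} [Fintype ι] [Fintype κ] (P : Matrix ι κ ℝ) : Pᴴ = Pᵀ := by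
  ext i j; simp [conjTranspose_apply]

def unembed (n m L : ℕ) (hL : 1 ≤ L) :
    (Fin n ⊕ Fin m) ⊕ (Fin (L - 1) × Fin m) → Fin n ⊕ (Fin L × Fin m)
  | Sum.inl (Sum.inl i') => Sum.inl i'
  | Sum.inl (Sum.inr l) => Sum.inr (⟨0, hL⟩, l)
  | Sum.inr (t, l) => Sum.inr (⟨(t : ℕ) + 1, by have := t.isLt; omega⟩, l)

def embedEquiv (n m L : ℕ) (hL : 1 ≤ L) :
    (Fin n ⊕ (Fin L × Fin m)) ≃ ((Fin n ⊕ Fin m) ⊕ (Fin (L - 1) × Fin m)) where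
  toFun := embed n m L
  invFun := unembed n m L hL
  left_inv := by
    rintro (i' | ⟨t, l⟩)
    · rfl
    · by_cases h : (t : ℕ) = 0
      · simp only [embed, h, dif_pos]
        exact congrArg Sum.inr (Prod.ext (Fin.ext h.symm) rfl)
      · simp only [embed, h, dif_neg]
        exact congrArg Sum.inr (Prod.ext (Fin.ext (by simp; omega)) rfl)
  right_inv := by
    rintro ((i' | l) | ⟨t, l⟩)
    · rfl
    · simp [embed, unembed]
    · simp only [unembed, embed]
      rw [dif_neg (by simp)]
      exact congrArg Sum.inr (Prod.ext (Fin.ext (by simp)) rfl)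

end MainAux

/-- robustness of the PE bound: if `u` is `K_u`-PE of order `L+n` and
`‖Ẑ - Z̃‖₂ ≤ ε` (spectral norm, expressed via the Euclidean operator bound), then
`[H_1(x); H_L(u)] [H_1(x); H_L(u)]ᵀ ⪰ (1/(2(n+1))) Ẑ K_u Ẑᵀ - (ε²/(n+1)) σ_max(K_u) I`. -/
theorem stmt_18 {n m : ℕ} (hn : 0 < n) (hm : 0 < m)
    (A : Matrix (Fin n) (Fin n) ℝ) (B : Matrix (Fin n) (Fin m) ℝ)
    (d : ℕ → ℝ) (hd0 : d 0 ≠ 0)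
    (hdnorm : ∑ j ∈ Finset.range (n + 1), d j ^ 2 = 1)
    (hCayley : ∑ j ∈ Finset.range (n + 1), d j • A ^ (n - j) = 0)
    (L N : ℕ) (hL : 1 ≤ L) (hN : L + n ≤ N)
    (u : ℕ → Fin m → ℝ)
    (Ku : Matrix (Fin (L + n) × Fin m) (Fin (L + n) × Fin m) ℝ) (hKu : Ku.PosDef)
    (hPE : ((∑ k ∈ Finset.range (N - (L + n) + 1),
        vecMulVec (fun il : Fin (L + n) × Fin m => u (k + (il.1 : ℕ)) il.2)
          (fun il : Fin (L + n) × Fin m => u (k + (il.1 : ℕ)) il.2)) - Ku).PosSemidef)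
    (ε : ℝ) (hε : 0 < ε)
    (Zhat : Matrix ((Fin n ⊕ Fin m) ⊕ (Fin (L - 1) × Fin m)) (Fin (L + n) × Fin m) ℝ)
    (hZhat : ∀ v : Fin (L + n) × Fin m → ℝ,
        enorm' ((Zhat - Ztil A B d L).mulVec v) ≤ ε * enorm' v) :
    ∀ x0 : Fin n → ℝ,
      (Hxu A B x0 u L N * (Hxu A B x0 u L N)ᴴ -
          (((1 : ℝ) / (2 * (n + 1))) •
              ((Zhat * Ku * Zhatᴴ).submatrix (embed n m L) (embed n m L)) -
            (ε ^ 2 / (n + 1) * sigmaMax Ku) •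
              (1 : Matrix (Fin n ⊕ (Fin L × Fin m)) (Fin n ⊕ (Fin L × Fin m)) ℝ))).PosSemidef := by
  intro x0
  classical
  have hLn : 0 < L + n := by omega
  haveI : Nonempty (Fin (L + n) × Fin m) := ⟨(⟨0, hLn⟩, ⟨0, hm⟩)⟩
  set P := Hxu A B x0 u L N with hPdef
  set Q := Zhat * Ku * Zhatᴴ with hQdef
  have hQherm : Q.IsHermitian := isHermitian_mul_mul_conjTranspose Zhat hKu.1
  have hPherm : (P * Pᴴ).IsHermitian := isHermitian_mul_conjTranspose_self P
  rw [posSemidef_iff_dotProduct_mulVec]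
  constructor
  · show _ᴴ = _
    rw [conjTranspose_sub, conjTranspose_sub, conjTranspose_smul, conjTranspose_smul,
      conjTranspose_one, conjTranspose_submatrix, hQherm.eq, hPherm.eq]
    simp
  · intro x
    have hstarx : star x = x := funext fun i => star_trivial _
    rw [hstarx]
    set e := embedEquiv n m L hL with hedef
    set v' : ((Fin n ⊕ Fin m) ⊕ (Fin (L - 1) × Fin m)) → ℝ := x ∘ e.symm with hv'
    set y := x ᵥ* P with hy
    set w := v' ᵥ* Zhat with hw
    set wz := v' ᵥ* Ztil A B d L with hwz
    set we := v' ᵥ* (Zhat - Ztil A B d L) with hwe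
    have hQuad1 : x ⬝ᵥ ((P * Pᴴ) *ᵥ x) = y ⬝ᵥ y := by
      rw [← mulVec_mulVec, dotProduct_mulVec, ← hy]
      congr 1
      rw [conjT_real P, mulVec_transpose, hy]
    have hQuad2 : x ⬝ᵥ ((Q.submatrix (embed n m L) (embed n m L)) *ᵥ x) = v' ⬝ᵥ (Q *ᵥ v') := by
      rw [show embed n m L = ⇑e from rfl, submatrix_mulVec_equiv]
      rw [dotProduct, dotProduct]
      refine Fintype.sum_equiv e _ _ fun i => ?_
      simp only [Function.comp_apply, hv', Equiv.symm_apply_apply]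
    have hQuad3 : v' ⬝ᵥ (Q *ᵥ v') = w ⬝ᵥ (Ku *ᵥ w) := by
      rw [hQdef, ← mulVec_mulVec, ← mulVec_mulVec, dotProduct_mulVec, ← hw]
      congr 1
      rw [conjT_real Zhat, mulVec_transpose, hw]
    have hsplit : w = wz + we := by
      funext j
      simp only [hw, hwz, hwe, Pi.add_apply, vecMul, dotProduct, Matrix.sub_apply, mul_sub]
      rw [Finset.sum_sub_distrib]
      ring
    have hF2 : w ⬝ᵥ (Ku *ᵥ w) ≤ 2 * (wz ⬝ᵥ (Ku *ᵥ wz)) + 2 * (we ⬝ᵥ (Ku *ᵥ we)) := by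
      have h0 := hKu.posSemidef.dotProduct_mulVec_nonneg (wz - we)
      have hsw : star (wz - we) = wz - we := funext fun i => star_trivial _
      rw [hsw] at h0
      have hsym : wz ⬝ᵥ (Ku *ᵥ we) = we ⬝ᵥ (Ku *ᵥ wz) := by
        rw [dotProduct_mulVec, ← mulVec_transpose, ← conjT_real Ku, hKu.1.eq, dotProduct_comm]
      rw [hsplit]
      simp only [mulVec_add, mulVec_sub, dotProduct_add, dotProduct_sub, add_dotProduct,
        sub_dotProduct] at h0 ⊢
      linarith
    have hvx : v' ⬝ᵥ v' = x ⬝ᵥ x := by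
      rw [dotProduct, dotProduct]
      exact Fintype.sum_equiv e.symm _ _ fun i'' => by simp only [hv', Function.comp_apply]
    have hwe_bound : we ⬝ᵥ we ≤ ε ^ 2 * (x ⬝ᵥ x) := by
      have h1 : enorm' we ≤ ε * enorm' v' := vecMul_enorm_le hε.le hZhat v'
      have h2 : we ⬝ᵥ we = enorm' we ^ 2 := by
        rw [enorm_sq, dotProduct]
        exact Finset.sum_congr rfl fun i _ => (sq (we i)).symm
      have h4 : enorm' v' ^ 2 = x ⬝ᵥ x := by
        rw [enorm_sq, ← hvx, dotProduct]
        exact Finset.sum_congr rfl fun i _ => sq (v' i)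
      calc we ⬝ᵥ we = enorm' we ^ 2 := h2
        _ ≤ (ε * enorm' v') ^ 2 := by
            have := mul_self_le_mul_self (enorm_nonneg' we) h1
            rwa [← sq, ← sq] at this
        _ = ε ^ 2 * (enorm' v' ^ 2) := by ring
        _ = ε ^ 2 * (x ⬝ᵥ x) := by rw [h4]
    have hσ0 : 0 ≤ sigmaMax Ku := by unfold sigmaMax; exact Real.sqrt_nonneg _
    have hF3 : we ⬝ᵥ (Ku *ᵥ we) ≤ sigmaMax Ku * (ε ^ 2 * (x ⬝ᵥ x)) :=
      (quad_le_sigmaMax hKu we).trans (mul_le_mul_of_nonneg_left hwe_bound hσ0)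
    -- the key PE bound
    set c := N - (L + n) + 1 with hc
    set yext : ℕ → ℝ := fun t => ∑ i, x i *
        Sum.elim (stateSeq A B x0 u t) (fun il : Fin L × Fin m => u (t + (il.1 : ℕ)) il.2) i
      with hyext
    have hF1 : wz ⬝ᵥ (Ku *ᵥ wz) ≤ ((n : ℝ) + 1) * (y ⬝ᵥ y) := by
      have hPE' : wz ⬝ᵥ (Ku *ᵥ wz) ≤ ∑ k ∈ range c,
          ((fun il : Fin (L + n) × Fin m => u (k + (il.1 : ℕ)) il.2) ⬝ᵥ wz) ^ 2 := by
        have h0 := hPE.dotProduct_mulVec_nonneg wz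
        have hsw : star wz = wz := funext fun i => star_trivial _
        rw [hsw, sub_mulVec, dotProduct_sub, dot_sum_mulVec] at h0
        have h1 : ∀ k ∈ range c,
            wz ⬝ᵥ (vecMulVec (fun il : Fin (L + n) × Fin m => u (k + (il.1 : ℕ)) il.2)
              (fun il : Fin (L + n) × Fin m => u (k + (il.1 : ℕ)) il.2) *ᵥ wz)
            = ((fun il : Fin (L + n) × Fin m => u (k + (il.1 : ℕ)) il.2) ⬝ᵥ wz) ^ 2 :=
          fun k _ => dot_vecMulVec _ _
        rw [Finset.sum_congr rfl h1] at h0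
        linarith
      have hcore : ∀ k0, (fun il : Fin (L + n) × Fin m => u (k0 + (il.1 : ℕ)) il.2) ⬝ᵥ wz
          = ∑ r ∈ range (n + 1), d (n - r) * yext (k0 + r) := by
        intro k0
        rw [dotProduct_comm, hwz, ← dotProduct_mulVec]
        rw [dotProduct]
        rw [← Fintype.sum_equiv e
          (fun i => x i * ((Ztil A B d L) *ᵥ
            (fun il : Fin (L + n) × Fin m => u (k0 + (il.1 : ℕ)) il.2)) (e i))
          (fun i'' => v' i'' * ((Ztil A B d L) *ᵥ
            (fun il : Fin (L + n) × Fin m => u (k0 + (il.1 : ℕ)) il.2)) i'')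
          (fun i => by simp only [hv', Function.comp_apply, Equiv.symm_apply_apply])]
        have hterm : ∀ i : Fin n ⊕ (Fin L × Fin m),
            x i * ((Ztil A B d L) *ᵥ
              (fun il : Fin (L + n) × Fin m => u (k0 + (il.1 : ℕ)) il.2)) (e i)
            = x i * ∑ r ∈ range (n + 1), d (n - r) *
                Sum.elim (stateSeq A B x0 u (k0 + r))
                  (fun il : Fin L × Fin m => u (k0 + r + (il.1 : ℕ)) il.2) i := by
          intro i
          congr 1
          rw [show ((Ztil A B d L) *ᵥ
              (fun il : Fin (L + n) × Fin m => u (k0 + (il.1 : ℕ)) il.2)) (e i)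
            = ∑ jl : Fin (L + n) × Fin m, Ztil A B d L (embed n m L i) jl *
                u (k0 + (jl.1 : ℕ)) jl.2 from rfl]
          exact core_id A B d hCayley L hL x0 u k0 i
        rw [Finset.sum_congr rfl fun i _ => hterm i]
        simp only [Finset.mul_sum]
        rw [Finset.sum_comm]
        refine Finset.sum_congr rfl fun r _ => ?_
        rw [hyext]
        simp only [Finset.mul_sum]
        exact Finset.sum_congr rfl fun i _ => by ring
      rw [Finset.sum_congr rfl fun k0 _ => by rw [hcore k0]] at hPE'
      have hy_eq : y ⬝ᵥ y = ∑ t ∈ range (N - L + 1), yext t ^ 2 := by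
        rw [dotProduct, ← Fin.sum_univ_eq_sum_range (fun t => yext t ^ 2) (N - L + 1)]
        refine Finset.sum_congr rfl fun kk _ => ?_
        have hYk : y kk = yext (kk : ℕ) := by
          rw [hy, hyext]
          rfl
        rw [hYk, sq]
      have hsum : ∑ k0 ∈ range c, (∑ r ∈ range (n + 1), d (n - r) * yext (k0 + r)) ^ 2
          ≤ ((n : ℝ) + 1) * ∑ t ∈ range (N - L + 1), yext t ^ 2 := by
        have h1 : ∀ k0 : ℕ, (∑ r ∈ range (n + 1), d (n - r) * yext (k0 + r)) ^ 2
            ≤ ((n : ℝ) + 1) * ∑ r ∈ range (n + 1), (d (n - r) * yext (k0 + r)) ^ 2 := by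
          intro k0
          have := sq_sum_le_card_mul_sum_sq (s := range (n + 1))
            (f := fun r => d (n - r) * yext (k0 + r))
          simpa using this
        calc ∑ k0 ∈ range c, (∑ r ∈ range (n + 1), d (n - r) * yext (k0 + r)) ^ 2
            ≤ ∑ k0 ∈ range c, ((n : ℝ) + 1) *
                ∑ r ∈ range (n + 1), (d (n - r) * yext (k0 + r)) ^ 2 :=
              Finset.sum_le_sum fun k0 _ => h1 k0
          _ = ((n : ℝ) + 1) * ∑ k0 ∈ range c,
                ∑ r ∈ range (n + 1), (d (n - r) * yext (k0 + r)) ^ 2 := by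
              rw [← Finset.mul_sum]
          _ = ((n : ℝ) + 1) * ∑ r ∈ range (n + 1), ∑ k0 ∈ range c,
                (d (n - r)) ^ 2 * yext (k0 + r) ^ 2 := by
              congr 1
              exact Finset.sum_comm.trans
                (Finset.sum_congr rfl fun r _ => Finset.sum_congr rfl fun k0 _ => by ring)
          _ ≤ ((n : ℝ) + 1) * ∑ r ∈ range (n + 1), (d (n - r)) ^ 2 *
                ∑ t ∈ range (N - L + 1), yext t ^ 2 := by
              refine mul_le_mul_of_nonneg_left (Finset.sum_le_sum fun r hr => ?_) (by positivity)
              rw [← Finset.mul_sum]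
              refine mul_le_mul_of_nonneg_left ?_ (sq_nonneg _)
              have hIco : ∑ k0 ∈ range c, yext (k0 + r) ^ 2
                  = ∑ t ∈ Finset.Ico r (r + c), yext t ^ 2 := by
                rw [Finset.sum_Ico_eq_sum_range]
                have hrc : r + c - r = c := by omega
                rw [hrc]
                exact Finset.sum_congr rfl fun k0 _ => by rw [Nat.add_comm r k0]
              rw [hIco]
              refine Finset.sum_le_sum_of_subset_of_nonneg ?_ (fun t _ _ => sq_nonneg _)
              intro t ht
              rw [Finset.mem_Ico] at ht
              rw [Finset.mem_range] at hr ⊢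
              omega
          _ = ((n : ℝ) + 1) * ∑ t ∈ range (N - L + 1), yext t ^ 2 := by
              rw [← Finset.sum_mul]
              have hd : ∑ r ∈ range (n + 1), d (n - r) ^ 2 = 1 := by
                have hrefl := Finset.sum_range_reflect (fun j => d j ^ 2) (n + 1)
                rw [hdnorm] at hrefl
                rw [← hrefl]
                exact Finset.sum_congr rfl fun r hr => by norm_num
              rw [hd, one_mul]
      rw [hy_eq]
      exact hPE'.trans hsum
    -- assemble
    have hgoal : x ⬝ᵥ ((P * Pᴴ -
        (((1 : ℝ) / (2 * ((n : ℝ) + 1))) • (Q.submatrix (embed n m L) (embed n m L)) -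
          (ε ^ 2 / ((n : ℝ) + 1) * sigmaMax Ku) • 1)) *ᵥ x)
        = (y ⬝ᵥ y) - (((1 : ℝ) / (2 * ((n : ℝ) + 1))) * (w ⬝ᵥ (Ku *ᵥ w)) -
            (ε ^ 2 / ((n : ℝ) + 1) * sigmaMax Ku) * (x ⬝ᵥ x)) := by
      rw [sub_mulVec, dotProduct_sub, sub_mulVec, dotProduct_sub,
        smul_mulVec, dotProduct_smul, smul_mulVec, dotProduct_smul, one_mulVec,
        smul_eq_mul, smul_eq_mul, hQuad1, hQuad2, hQuad3]
    rw [hgoal]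
    have hnn : (0 : ℝ) < (n : ℝ) + 1 := by positivity
    have hxx : 0 ≤ x ⬝ᵥ x := Finset.sum_nonneg fun i _ => mul_self_nonneg _
    have hyy : 0 ≤ y ⬝ᵥ y := Finset.sum_nonneg fun i _ => mul_self_nonneg _
    have hchain : w ⬝ᵥ (Ku *ᵥ w) ≤ 2 * (((n : ℝ) + 1) * (y ⬝ᵥ y))
        + 2 * (sigmaMax Ku * (ε ^ 2 * (x ⬝ᵥ x))) := by linarith
    have key : ((1 : ℝ) / (2 * ((n : ℝ) + 1))) * (w ⬝ᵥ (Ku *ᵥ w))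
        ≤ y ⬝ᵥ y + ε ^ 2 / ((n : ℝ) + 1) * sigmaMax Ku * (x ⬝ᵥ x) := by
      calc ((1 : ℝ) / (2 * ((n : ℝ) + 1))) * (w ⬝ᵥ (Ku *ᵥ w))
          ≤ ((1 : ℝ) / (2 * ((n : ℝ) + 1))) * (2 * (((n : ℝ) + 1) * (y ⬝ᵥ y))
              + 2 * (sigmaMax Ku * (ε ^ 2 * (x ⬝ᵥ x)))) :=
            mul_le_mul_of_nonneg_left hchain (by positivity)
        _ = y ⬝ᵥ y + ε ^ 2 / ((n : ℝ) + 1) * sigmaMax Ku * (x ⬝ᵥ x) := by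
            field_simp
    linarith
end
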